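/- arXiv:2005.10809 — 6 statements merged into one kernel-verified Lean document; each statement's English description precedes it below -/
import Mathlib

section
/- Let k ≥ 2 and A = {a_0, a_1, ..., a_k} with 0 = a_0 < a_1 < ... < a_k and gcd(A) = 1. For every positive integer t, set c'_t = (t·a_k − 1)·(a_1 + ... + a_{k−1}) and d'_t = (k−1)(t·a_k − 1)·a_k. Then for every positive integer h, every integer n with c'_t ≤ n ≤ h·a_k − d'_t has at least t representations as a sum of h elements of A; that is, [c'_t, h·a_k − d'_t] ⊆ (hA)^{(t)}. -/
open Finset

/-- `r_{A,h}(n)`: the number of multiset representations of `n` as a sum of `h` elements of `A`. -/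
def repCount (A : Finset ℤ) (h : ℕ) (n : ℤ) : ℕ :=
  ((A.sym h).filter (fun m => (Sym.toMultiset m).sum = n)).card

/-- `(hA)^{(t)}`: integers with at least `t` representations. -/
def sumsetT (A : Finset ℤ) (h t : ℕ) : Set ℤ :=
  {n | t ≤ repCount A h n}

lemma finset_bezout (s : Finset ℕ) (f : ℕ → ℤ) :
    ∃ c : ℕ → ℤ, s.gcd f = ∑ i ∈ s, c i * f i := by
  classical
  induction s using Finset.induction_on with
  | empty => exact ⟨fun _ => 0, by simp⟩
  | insert _ _ ha ih =>
    rename_i b s0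
    obtain ⟨c, hc⟩ := ih
    refine ⟨fun i => if i = b then (f b).gcdA (s0.gcd f) else (f b).gcdB (s0.gcd f) * c i, ?_⟩
    rw [Finset.gcd_insert, Finset.sum_insert ha]; simp only [if_pos rfl, if_true]
    have h2 : GCDMonoid.gcd (f b) (s0.gcd f) = f b * (f b).gcdA (s0.gcd f) + (s0.gcd f) * (f b).gcdB (s0.gcd f) := by
      rw [← Int.coe_gcd, Int.gcd_eq_gcd_ab]
    have : ∀ i ∈ s0, (if i = b then (f b).gcdA (s0.gcd f) else (f b).gcdB (s0.gcd f) * c i) * f i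
        = (f b).gcdB (s0.gcd f) * (c i * f i) := by
      intro i hi
      rw [if_neg (by rintro rfl; exact ha hi), mul_assoc]
    rw [Finset.sum_congr rfl this, ← Finset.mul_sum, ← hc, h2]
    ring

lemma aux_card (s : Finset ℕ) (u : ℕ → ℕ) (a : ℕ → ℤ) :
    Multiset.card (∑ j ∈ s, Multiset.replicate (u j) (a j)) = ∑ j ∈ s, u j := by
  classical
  induction s using Finset.induction_on with
  | empty => simp
  | insert _ _ ha ih =>
    rename_i b s0
    rw [Finset.sum_insert ha, Finset.sum_insert ha, Multiset.card_add,
      Multiset.card_replicate, ih]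

lemma aux_sum (s : Finset ℕ) (u : ℕ → ℕ) (a : ℕ → ℤ) :
    (∑ j ∈ s, Multiset.replicate (u j) (a j)).sum = ∑ j ∈ s, (u j : ℤ) * a j := by
  classical
  induction s using Finset.induction_on with
  | empty => simp
  | insert _ _ ha ih =>
    rename_i b s0
    rw [Finset.sum_insert ha, Finset.sum_insert ha, Multiset.sum_add,
      Multiset.sum_replicate, ih, nsmul_eq_mul]

set_option maxHeartbeats 2000000 in
theorem stmt1 (k : ℕ) (hk : 2 ≤ k) (a : ℕ → ℤ)
    (ha0 : a 0 = 0) (hmono : ∀ i j, i ≤ k → j ≤ k → i < j → a i < a j)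
    (A : Finset ℤ) (hA : A = (Finset.range (k + 1)).image a)
    (hgcd : A.gcd id = 1)
    (t : ℕ) (ht : 0 < t)
    (c' d' : ℤ)
    (hc' : c' = ((t : ℤ) * a k - 1) * ∑ j ∈ Finset.Icc 1 (k - 1), a j)
    (hd' : d' = ((k : ℤ) - 1) * ((t : ℤ) * a k - 1) * a k)
    (h : ℕ) (hh : 0 < h) :
    Set.Icc c' ((h : ℤ) * a k - d') ⊆ sumsetT A h t := by
  classical
  have hk' : (2:ℤ) ≤ (k:ℤ) := by exact_mod_cast hk
  have hapos : ∀ j, 1 ≤ j → j ≤ k → 0 < a j := fun j h1 h2 => by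
    have := hmono 0 j (by omega) h2 (by omega); omega
  have hak1 : (1:ℤ) ≤ a k := hapos k (by omega) le_rfl
  have ha1pos : 0 < a 1 := hapos 1 le_rfl (by omega)
  have ha1k : a 1 < a k := hmono 1 k (by omega) le_rfl (by omega)
  have ht1 : (1:ℤ) ≤ (t:ℤ) := by exact_mod_cast ht
  intro n hn
  obtain ⟨hn1, hn2⟩ := hn
  -- Bezout representation
  have hgcd' : (Finset.range (k+1)).gcd a = 1 := by
    rw [hA, Finset.gcd_image] at hgcd
    simpa [Function.comp] using hgcd
  obtain ⟨c, hc⟩ := finset_bezout (Finset.range (k+1)) a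
  set y : ℕ → ℤ := fun i => n * c i with hy
  have hrep : n = ∑ i ∈ Finset.range (k+1), y i * a i := by
    have h1 : (1:ℤ) = ∑ i ∈ Finset.range (k+1), c i * a i := by rw [← hc, hgcd']
    calc n = n * 1 := (mul_one n).symm
    _ = ∑ i ∈ Finset.range (k+1), y i * a i := by
        rw [h1, Finset.mul_sum]; exact Finset.sum_congr rfl fun i _ => by simp [hy]; ring
  -- split the index set
  have hsetsplit : Finset.range (k+1) = insert 0 (insert k (Finset.Icc 1 (k-1))) := by
    ext i
    simp only [Finset.mem_range, Finset.mem_insert, Finset.mem_Icc]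
    omega
  have hsplit : ∀ f : ℕ → ℤ, ∑ i ∈ Finset.range (k+1), f i
      = f 0 + (f k + ∑ j ∈ Finset.Icc 1 (k-1), f j) := by
    intro f
    rw [hsetsplit, Finset.sum_insert, Finset.sum_insert]
    · simp only [Finset.mem_Icc]; omega
    · simp only [Finset.mem_insert, Finset.mem_Icc]; omega
  set x : ℕ → ℤ := fun j => y j % a k with hxdef
  set S : ℤ := ∑ j ∈ Finset.Icc 1 (k-1), x j * a j with hS
  have hakne : a k ≠ 0 := by omega
  have hdvd : a k ∣ n - S := by
    have heq : n - S = y k * a k + ∑ j ∈ Finset.Icc 1 (k-1), (y j - x j) * a j := by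
      rw [hrep, hsplit (fun i => y i * a i)]
      have hsub : ∑ j ∈ Finset.Icc 1 (k-1), (y j - x j) * a j
          = ∑ j ∈ Finset.Icc 1 (k-1), y j * a j - ∑ j ∈ Finset.Icc 1 (k-1), x j * a j := by
        rw [← Finset.sum_sub_distrib]
        exact Finset.sum_congr rfl fun j _ => by ring
      simp only [ha0, mul_zero, zero_add, hS, hsub]
      ring
    rw [heq]
    refine dvd_add (dvd_mul_left (a k) (y k)) (Finset.dvd_sum fun j _ => ?_)
    have : y j - x j = a k * (y j / a k) := by
      simp only [hxdef]
      rw [Int.emod_def]; ring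
    exact Dvd.dvd.mul_right ⟨y j / a k, this⟩ (a j)
  set z : ℤ := (n - S) / a k with hzdef
  have hzak : z * a k = n - S := by
    rw [hzdef, Int.ediv_mul_cancel hdvd]
  have hx0 : ∀ j, 0 ≤ x j := fun j => Int.emod_nonneg _ hakne
  have hxlt : ∀ j, x j < a k := fun j => Int.emod_lt_of_pos _ (by omega)
  have hSnn : 0 ≤ S :=
    Finset.sum_nonneg fun j hj => by
      rw [Finset.mem_Icc] at hj
      exact mul_nonneg (hx0 j) (hapos j hj.1 (by omega)).le
  have hSig1 : a 1 ≤ ∑ j ∈ Finset.Icc 1 (k-1), a j := by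
    refine Finset.single_le_sum (f := a) (fun j hj => ?_) (by rw [Finset.mem_Icc]; omega)
    rw [Finset.mem_Icc] at hj
    exact (hapos j hj.1 (by omega)).le
  have hSle : S ≤ (a k - 1) * ∑ j ∈ Finset.Icc 1 (k-1), a j := by
    rw [hS, Finset.mul_sum]
    refine Finset.sum_le_sum fun j hj => ?_
    rw [Finset.mem_Icc] at hj
    exact mul_le_mul_of_nonneg_right (by have := hxlt j; omega) (hapos j hj.1 (by omega)).le
  -- lower bound on z
  have hzl : ((t:ℤ) - 1) * a 1 ≤ z := by
    have h1 : ((t:ℤ) - 1) * a 1 * a k ≤ z * a k := by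
      rw [hzak]
      have h2 : c' - (a k - 1) * ∑ j ∈ Finset.Icc 1 (k-1), a j ≤ n - S := by
        linarith
      have h3 : ((t:ℤ) - 1) * a 1 * a k ≤ c' - (a k - 1) * ∑ j ∈ Finset.Icc 1 (k-1), a j := by
        rw [hc']
        nlinarith [mul_nonneg (mul_nonneg (by linarith : (0:ℤ) ≤ (t:ℤ) - 1)
          (by linarith : (0:ℤ) ≤ a k)) (by linarith : (0:ℤ) ≤ (∑ j ∈ Finset.Icc 1 (k-1), a j) - a 1)]
      linarith
    exact le_of_mul_le_mul_right h1 (by omega)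
  have hz0 : 0 ≤ z := le_trans (mul_nonneg (by linarith) ha1pos.le) hzl
  -- upper bound on z
  have hzu : z ≤ (h:ℤ) - ((k:ℤ) - 1) * ((t:ℤ) * a k - 1) := by
    have h1 : z * a k ≤ ((h:ℤ) - ((k:ℤ) - 1) * ((t:ℤ) * a k - 1)) * a k := by
      rw [hzak]
      have : n ≤ (h:ℤ) * a k - d' := hn2
      rw [hd'] at this
      nlinarith
    exact le_of_mul_le_mul_right h1 (by omega)
  -- bound on sum of x
  have hsumx : ∑ j ∈ Finset.Icc 1 (k-1), x j ≤ ((k:ℤ) - 1) * (a k - 1) := by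
    have h1 : ∑ j ∈ Finset.Icc 1 (k-1), x j ≤ ∑ _j ∈ Finset.Icc 1 (k-1), (a k - 1) :=
      Finset.sum_le_sum fun j _ => by have := hxlt j; omega
    rw [Finset.sum_const, Nat.card_Icc] at h1
    have hcard : ((k - 1 + 1 - 1 : ℕ) : ℤ) = (k:ℤ) - 1 := by
      push_cast [Nat.sub_add_cancel (by omega : 1 ≤ k)]; omega
    calc ∑ j ∈ Finset.Icc 1 (k-1), x j ≤ (k - 1 + 1 - 1 : ℕ) • (a k - 1) := h1
    _ = ((k - 1 + 1 - 1 : ℕ) : ℤ) * (a k - 1) := by rw [nsmul_eq_mul]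
    _ = ((k:ℤ) - 1) * (a k - 1) := by rw [hcard]
  -- natural number versions
  set ak' : ℕ := (a k).toNat with hak'def
  set a1' : ℕ := (a 1).toNat with ha1'def
  have hak' : (ak' : ℤ) = a k := Int.toNat_of_nonneg (by omega)
  have ha1' : (a1' : ℤ) = a 1 := Int.toNat_of_nonneg ha1pos.le
  have hak'pos : 0 < ak' := by omega
  set u : ℕ → ℕ := fun j => (x j).toNat with hudef
  have hu : ∀ j, ((u j : ℤ)) = x j := fun j => Int.toNat_of_nonneg (hx0 j)
  set w : ℕ := z.toNat with hwdef
  have hw : (w : ℤ) = z := Int.toNat_of_nonneg hz0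
  have hwi : ∀ i < t, i * a1' ≤ w := by
    intro i hi
    have hi' : (i:ℤ) ≤ (t:ℤ) - 1 := by
      have : (i:ℤ) + 1 ≤ (t:ℤ) := by exact_mod_cast hi
      linarith
    have : ((i * a1' : ℕ) : ℤ) ≤ (w:ℤ) := by
      push_cast [ha1', hw]
      calc (i:ℤ) * a 1 ≤ ((t:ℤ) - 1) * a 1 := by
            exact mul_le_mul_of_nonneg_right hi' ha1pos.le
      _ ≤ z := hzl
    exact_mod_cast this
  set T : ℕ → ℕ := fun i => (u 1 + i * ak') + (∑ j ∈ Finset.Icc 2 (k-1), u j) + (w - i * a1')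
    with hTdef
  have hIccsplit : Finset.Icc 1 (k-1) = insert 1 (Finset.Icc 2 (k-1)) := by
    ext j
    simp only [Finset.mem_Icc, Finset.mem_insert]
    omega
  have h1notin : 1 ∉ Finset.Icc 2 (k-1) := by simp
  have hsum2 : x 1 + ∑ j ∈ Finset.Icc 2 (k-1), x j = ∑ j ∈ Finset.Icc 1 (k-1), x j := by
    rw [hIccsplit, Finset.sum_insert h1notin]
  have hTcast : ∀ i < t,
      (T i : ℤ) = (∑ j ∈ Finset.Icc 1 (k-1), x j) + i * (a k - a 1) + z := by
    intro i hi
    simp only [hTdef]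
    push_cast [Nat.cast_sub (hwi i hi)]
    rw [hak', ha1', hw, hu 1]
    have : ∑ j ∈ Finset.Icc 2 (k-1), ((u j : ℤ)) = ∑ j ∈ Finset.Icc 2 (k-1), x j :=
      Finset.sum_congr rfl fun j _ => hu j
    rw [this, ← hsum2]
    ring
  have hTle : ∀ i < t, T i ≤ h := by
    intro i hi
    have hi' : (i:ℤ) ≤ (t:ℤ) - 1 := by
      have : (i:ℤ) + 1 ≤ (t:ℤ) := by exact_mod_cast hi
      linarith
    have hcast : (T i : ℤ) ≤ (h:ℤ) := by
      rw [hTcast i hi]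
      nlinarith [mul_nonneg (by linarith : (0:ℤ) ≤ (t:ℤ) - 1 - i)
          (by linarith : (0:ℤ) ≤ a k - a 1),
        mul_nonneg (by linarith : (0:ℤ) ≤ (t:ℤ) - 1) ha1pos.le,
        mul_nonneg (by linarith : (0:ℤ) ≤ (k:ℤ) - 2)
          (mul_nonneg (by linarith : (0:ℤ) ≤ (t:ℤ) - 1) (by linarith : (0:ℤ) ≤ a k))]
    exact_mod_cast hcast
  -- the multisets
  set M : ℕ → Multiset ℤ := fun i =>
    Multiset.replicate (h - T i) 0 + Multiset.replicate (u 1 + i * ak') (a 1) +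
      (∑ j ∈ Finset.Icc 2 (k-1), Multiset.replicate (u j) (a j)) +
      Multiset.replicate (w - i * a1') (a k) with hMdef
  have hcardM : ∀ i < t, Multiset.card (M i) = h := by
    intro i hi
    simp only [hMdef, Multiset.card_add, Multiset.card_replicate, aux_card]
    have hT := hTle i hi
    simp only [hTdef] at hT ⊢
    set p := u 1 + i * ak'
    set q := w - i * a1'
    set s := ∑ j ∈ Finset.Icc 2 (k-1), u j
    omega
  have hsumM : ∀ i < t, (M i).sum = n := by
    intro i hi
    simp only [hMdef, Multiset.sum_add, Multiset.sum_replicate, aux_sum, smul_zero,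
      nsmul_eq_mul]
    push_cast [Nat.cast_sub (hwi i hi)]
    rw [hak', ha1', hw, hu 1]
    have hrw : ∑ j ∈ Finset.Icc 2 (k-1), ((u j : ℤ)) * a j
        = ∑ j ∈ Finset.Icc 2 (k-1), x j * a j :=
      Finset.sum_congr rfl fun j _ => by rw [hu j]
    rw [hrw]
    have hSsplit : S = x 1 * a 1 + ∑ j ∈ Finset.Icc 2 (k-1), x j * a j := by
      rw [hS, hIccsplit, Finset.sum_insert h1notin]
    have hn' : n = S + z * a k := by linarith [hzak]
    rw [hn', hSsplit]
    ring
  have hmemM : ∀ i, ∀ b ∈ M i, b ∈ A := by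
    intro i b hb
    have hmem' : ∀ j ≤ k, a j ∈ A := by
      intro j hj
      rw [hA, Finset.mem_image]
      exact ⟨j, Finset.mem_range.2 (by omega), rfl⟩
    simp only [hMdef, Multiset.mem_add, Multiset.mem_replicate, Multiset.mem_sum] at hb
    rcases hb with ((h0 | h1) | ⟨j, hj, hj2⟩) | hk2
    · rw [h0.2, ← ha0]; exact hmem' 0 (by omega)
    · rw [h1.2]; exact hmem' 1 (by omega)
    · rw [Finset.mem_Icc] at hj
      rw [hj2.2]
      exact hmem' j (by omega)
    · rw [hk2.2]; exact hmem' k le_rfl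
  have hcountM : ∀ i, Multiset.count (a 1) (M i) = u 1 + i * ak' := by
    intro i
    have hne0 : (0:ℤ) ≠ a 1 := by omega
    have hnek : a k ≠ a 1 := by omega
    simp only [hMdef, Multiset.count_add, Multiset.count_replicate, if_neg hne0,
      if_neg hnek, if_pos rfl, Multiset.count_sum']
    have hz' : ∑ j ∈ Finset.Icc 2 (k-1), (if a j = a 1 then u j else 0) = 0 := by
      refine Finset.sum_eq_zero fun j hj => ?_
      rw [Finset.mem_Icc] at hj
      rw [if_neg]
      have : a 1 < a j := hmono 1 j (by omega) (by omega) (by omega)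
      omega
    simp [hz']
  -- the injection into the filtered set
  set F : ℕ → Sym ℤ h := fun i =>
    if hci : Multiset.card (M i) = h then Sym.mk (M i) hci
    else Sym.mk (Multiset.replicate h 0) (Multiset.card_replicate h 0) with hFdef
  have key : t ≤ repCount A h n := by
    rw [repCount]
    have hinj := Finset.card_le_card_of_injOn F (s := Finset.range t)
      (t := (A.sym h).filter (fun m => (Sym.toMultiset m).sum = n)) ?_ ?_
    · simpa using hinj
    · intro i hi
      rw [Finset.mem_coe, Finset.mem_range] at hi
      rw [hFdef]
      simp only [dif_pos (hcardM i hi)]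
      rw [Finset.mem_coe, Finset.mem_filter]
      constructor
      · rw [Finset.mem_sym_iff]
        intro b hb
        exact hmemM i b hb
      · exact hsumM i hi
    · intro i hi i' hi' hFe
      simp only [Finset.coe_range, Set.mem_Iio] at hi hi'
      rw [hFdef] at hFe
      simp only [dif_pos (hcardM i hi), dif_pos (hcardM i' hi')] at hFe
      have hMe : M i = M i' := congrArg Subtype.val hFe
      have := congrArg (Multiset.count (a 1)) hMe
      rw [hcountM i, hcountM i'] at this
      have : i * ak' = i' * ak' := by omega
      exact Nat.eq_of_mul_eq_mul_right hak'pos this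
  exact key
end

section
/- Let A = {a_0, ..., a_k} be a finite set of integers with 0 = a_0 < a_1 < ... < a_k and gcd(A) = 1, with k ≥ 2. For every positive integer t, with h_t = (k−1)(t·a_k − 1)·a_k + 1, there exist nonnegative integers c_t, d_t and finite sets C_t ⊆ [0, c_t − 2], D_t ⊆ [0, d_t − 2] such that for all h ≥ h_t, (hA)^{(t)} = C_t ∪ [c_t, h·a_k − d_t] ∪ (h·a_k − D_t). -/
open Finset Pointwise

set_option maxHeartbeats 1000000

lemma repCount_eq_zero_of_neg (S : Finset ℤ) (hS : ∀ x ∈ S, 0 ≤ x) (h : ℕ) (n : ℤ)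
    (hn : n < 0) : repCount S h n = 0 := by
  rw [repCount, Finset.card_eq_zero, Finset.filter_eq_empty_iff]
  intro m hm hsum
  have : (0:ℤ) ≤ (Sym.toMultiset m).sum := by
    apply Multiset.sum_nonneg
    intro x hx
    exact hS x (Finset.mem_sym_iff.mp hm x hx)
  omega

lemma repCount_eq_zero_of_gt (S : Finset ℤ) (M : ℤ) (hS : ∀ x ∈ S, x ≤ M) (h : ℕ) (n : ℤ)
    (hn : (h:ℤ) * M < n) : repCount S h n = 0 := by
  rw [repCount, Finset.card_eq_zero, Finset.filter_eq_empty_iff]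
  intro m hm hsum
  have hcard : (Sym.toMultiset m).card = h := m.2
  have : (Sym.toMultiset m).sum ≤ (Sym.toMultiset m).card • M := by
    apply Multiset.sum_le_card_nsmul
    intro x hx
    exact hS x (Finset.mem_sym_iff.mp hm x hx)
  rw [hcard, nsmul_eq_mul] at this
  omega

lemma card_nonzero_le_sum (s : Multiset ℤ) (hpos : ∀ x ∈ s, 0 ≤ x) :
    ((s.filter (· ≠ 0)).card : ℤ) ≤ s.sum := by
  have h1 : (s.filter (· ≠ 0)).card • (1:ℤ) ≤ (s.filter (· ≠ 0)).sum := by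
    apply Multiset.card_nsmul_le_sum
    intro x hx
    have hx' := Multiset.mem_filter.mp hx
    have := hpos x hx'.1
    have hne : x ≠ 0 := hx'.2
    omega
  have h2 : (s.filter (· ≠ 0)).sum ≤ s.sum := by
    have hsplit : s.filter (· ≠ 0) + s.filter (fun x => ¬ x ≠ 0) = s :=
      Multiset.filter_add_not _ s
    have h0 : (0:ℤ) ≤ (s.filter (fun x => ¬ x ≠ 0)).sum := by
      apply Multiset.sum_nonneg
      intro x hx
      exact hpos x (Multiset.mem_of_le (Multiset.filter_le _ s) hx)
    calc (s.filter (· ≠ 0)).sum ≤ (s.filter (· ≠ 0)).sum + (s.filter (fun x => ¬ x ≠ 0)).sum := by omega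
      _ = s.sum := by rw [← Multiset.sum_add, hsplit]
  simp only [nsmul_eq_mul, mul_one] at h1
  omega

lemma replicate_zero_le (s : Multiset ℤ) (hpos : ∀ x ∈ s, 0 ≤ x) (n : ℤ) (hsum : s.sum = n)
    (r : ℕ) (hr : n + r ≤ (s.card : ℤ)) : Multiset.replicate r 0 ≤ s := by
  rw [← Multiset.le_count_iff_replicate_le]
  have hsplit : (s.filter (· ≠ 0)).card + (s.filter (fun x => ¬ x ≠ 0)).card = s.card := by
    rw [← Multiset.card_add, Multiset.filter_add_not]
  have hcount : s.count 0 = (s.filter (fun x => ¬ x ≠ 0)).card := by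
    rw [Multiset.count_eq_card_filter_eq]
    congr 1
    ext x
    simp [eq_comm]
  have hle := card_nonzero_le_sum s hpos
  rw [hsum] at hle
  omega

lemma repCount_stable (S : Finset ℤ) (h0 : (0:ℤ) ∈ S) (hpos : ∀ x ∈ S, 0 ≤ x)
    (n : ℤ) (h1 h2 : ℕ) (hn : n ≤ (h1:ℤ)) (h12 : h1 ≤ h2) :
    repCount S h2 n = repCount S h1 n := by
  classical
  rw [repCount, repCount]
  set r := h2 - h1 with hr
  have key : ∀ (m : Sym ℤ h2), m ∈ (S.sym h2).filter (fun m => (Sym.toMultiset m).sum = n) →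
      Multiset.replicate r 0 ≤ Sym.toMultiset m := by
    intro m hm
    rw [Finset.mem_filter] at hm
    refine replicate_zero_le _ ?_ n hm.2 r ?_
    · intro x hx
      exact hpos x (Finset.mem_sym_iff.mp hm.1 x (Sym.mem_coe.mp hx))
    · have h2' : Multiset.card (Sym.toMultiset m) = h2 := m.2
      rw [h2']
      push_cast
      omega
  symm
  refine Finset.card_bij'
    (fun (m : Sym ℤ h1) _ => (⟨Sym.toMultiset m + Multiset.replicate r 0, by
      rw [Multiset.card_add, Multiset.card_replicate, show Multiset.card (Sym.toMultiset m) = h1 from m.2]; omega⟩ : Sym ℤ h2))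
    (fun (m : Sym ℤ h2) hm => (⟨Sym.toMultiset m - Multiset.replicate r 0, by
      rw [Multiset.card_sub (key m hm), Multiset.card_replicate, show Multiset.card (Sym.toMultiset m) = h2 from m.2]; omega⟩ : Sym ℤ h1))
    ?_ ?_ ?_ ?_
  · intro m hm
    rw [Finset.mem_filter] at hm; refine Finset.mem_filter.mpr ?_
    constructor
    · apply Finset.mem_sym_iff.mpr
      intro x hx
      have hx' : x ∈ Sym.toMultiset m + Multiset.replicate r 0 := Sym.mem_coe.mpr hx
      rcases Multiset.mem_add.mp hx' with h | h
      · exact Finset.mem_sym_iff.mp hm.1 x (Sym.mem_coe.mp (Sym.mem_coe.mpr h))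
      · rw [Multiset.eq_of_mem_replicate h]; exact h0
    · show (Sym.toMultiset m + Multiset.replicate r 0).sum = n
      rw [Multiset.sum_add, Multiset.sum_replicate, smul_zero, add_zero]
      exact hm.2
  · intro m hm
    have hk := key m hm
    rw [Finset.mem_filter] at hm; refine Finset.mem_filter.mpr ?_
    constructor
    · apply Finset.mem_sym_iff.mpr
      intro x hx
      have hx' : x ∈ Sym.toMultiset m - Multiset.replicate r 0 := Sym.mem_coe.mpr hx
      exact Finset.mem_sym_iff.mp hm.1 x
        (Sym.mem_coe.mp (Multiset.mem_of_le (Multiset.sub_le_self _ _) hx'))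
    · show (Sym.toMultiset m - Multiset.replicate r 0).sum = n
      have hs : (Sym.toMultiset m - Multiset.replicate r 0).sum
          + (Multiset.replicate r (0:ℤ)).sum = (Sym.toMultiset m).sum := by
        rw [← Multiset.sum_add, tsub_add_cancel_of_le hk]
      rw [Multiset.sum_replicate, smul_zero, add_zero] at hs
      rw [hs]
      exact hm.2
  · intro m hm
    apply Sym.coe_injective
    show (Sym.toMultiset m + Multiset.replicate r 0) - Multiset.replicate r 0 = Sym.toMultiset m
    exact add_tsub_cancel_right _ _
  · intro m hm
    apply Sym.coe_injective
    show (Sym.toMultiset m - Multiset.replicate r 0) + Multiset.replicate r 0 = Sym.toMultiset m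
    exact tsub_add_cancel_of_le (key m hm)

lemma sum_map_reflect (M : ℤ) (s : Multiset ℤ) :
    (s.map (fun x => M - x)).sum = (s.card : ℤ) * M - s.sum := by
  induction s using Multiset.induction_on with
  | empty => simp
  | cons a s ih => simp [ih]; ring

lemma repCount_reflect (S : Finset ℤ) (M : ℤ) (h : ℕ) (n : ℤ) :
    repCount S h n = repCount (S.image (fun x => M - x)) h ((h:ℤ) * M - n) := by
  classical
  rw [repCount, repCount]
  refine Finset.card_bij'
    (fun (m : Sym ℤ h) _ => (⟨(Sym.toMultiset m).map (fun x => M - x), by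
      rw [Multiset.card_map, show Multiset.card (Sym.toMultiset m) = h from m.2]⟩ : Sym ℤ h))
    (fun (m : Sym ℤ h) _ => (⟨(Sym.toMultiset m).map (fun x => M - x), by
      rw [Multiset.card_map, show Multiset.card (Sym.toMultiset m) = h from m.2]⟩ : Sym ℤ h))
    ?_ ?_ ?_ ?_
  · intro m hm
    rw [Finset.mem_filter] at hm; refine Finset.mem_filter.mpr ?_
    constructor
    · apply Finset.mem_sym_iff.mpr
      intro x hx
      have hx' : x ∈ (Sym.toMultiset m).map (fun x => M - x) := Sym.mem_coe.mpr hx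
      obtain ⟨y, hy, rfl⟩ := Multiset.mem_map.mp hx'
      exact Finset.mem_image.mpr ⟨y, Finset.mem_sym_iff.mp hm.1 y (Sym.mem_coe.mp hy), rfl⟩
    · show ((Sym.toMultiset m).map (fun x => M - x)).sum = (h:ℤ) * M - n
      rw [sum_map_reflect, show Multiset.card (Sym.toMultiset m) = h from m.2, hm.2]
  · intro m hm
    rw [Finset.mem_filter] at hm; refine Finset.mem_filter.mpr ?_
    constructor
    · apply Finset.mem_sym_iff.mpr
      intro x hx
      have hx' : x ∈ (Sym.toMultiset m).map (fun x => M - x) := Sym.mem_coe.mpr hx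
      obtain ⟨y, hy, rfl⟩ := Multiset.mem_map.mp hx'
      have hyS := Finset.mem_sym_iff.mp hm.1 y (Sym.mem_coe.mp hy)
      obtain ⟨z, hz, rfl⟩ := Finset.mem_image.mp hyS
      simpa using hz
    · show ((Sym.toMultiset m).map (fun x => M - x)).sum = n
      rw [sum_map_reflect, show Multiset.card (Sym.toMultiset m) = h from m.2, hm.2]
      ring
  · intro m hm
    apply Sym.coe_injective
    show ((Sym.toMultiset m).map (fun x => M - x)).map (fun x => M - x) = Sym.toMultiset m
    rw [Multiset.map_map]
    convert Multiset.map_id (Sym.toMultiset m) using 2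
    simp [Function.comp]
  · intro m hm
    apply Sym.coe_injective
    show ((Sym.toMultiset m).map (fun x => M - x)).map (fun x => M - x) = Sym.toMultiset m
    rw [Multiset.map_map]
    convert Multiset.map_id (Sym.toMultiset m) using 2
    simp [Function.comp]

lemma finset_bezout_s2 (S : Finset ℤ) : ∃ f : ℤ → ℤ, ∑ x ∈ S, f x * x = S.gcd id := by
  classical
  induction S using Finset.induction_on with
  | empty => exact ⟨0, by simp⟩
  | @insert a S ha ih =>
    obtain ⟨f, hf⟩ := ih
    set g := S.gcd id with hg
    have hbez : (Int.gcd a g : ℤ) = a * Int.gcdA a g + g * Int.gcdB a g := Int.gcd_eq_gcd_ab a g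
    refine ⟨fun x => if x = a then Int.gcdA a g else Int.gcdB a g * f x, ?_⟩
    rw [Finset.sum_insert ha, Finset.gcd_insert]
    have hsum : ∑ x ∈ S, (if x = a then Int.gcdA a g else Int.gcdB a g * f x) * x
        = Int.gcdB a g * g := by
      rw [← hf, Finset.mul_sum]
      apply Finset.sum_congr rfl
      intro x hx
      have : x ≠ a := fun h => ha (h ▸ hx)
      simp [this]
      ring
    rw [hsum]
    simp only [if_true, ite_true, eq_self_iff_true]
    have : GCDMonoid.gcd (id a) g = (Int.gcd a g : ℤ) := (Int.coe_gcd a g).symm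
    rw [this, hbez]
    ring_nf

section Cover
variable (A : Finset ℤ) (m : ℕ)

/-- reachable sums of `j` elements mod `m` -/
noncomputable def gset [NeZero m] : ℕ → Finset (ZMod m)
  | 0 => {0}
  | j + 1 => A.image (fun x : ℤ => (x : ZMod m)) + gset j

variable [NeZero m]

lemma gset_succ (j : ℕ) : gset A m (j+1) = A.image (fun x : ℤ => (x : ZMod m)) + gset A m j := rfl

lemma gset_mono (h0 : (0:ℤ) ∈ A) (j : ℕ) : gset A m j ⊆ gset A m (j+1) := by
  intro z hz
  rw [gset_succ]
  rw [show z = (0:ZMod m) + z by rw [zero_add]]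
  exact Finset.add_mem_add (Finset.mem_image.mpr ⟨0, h0, by simp⟩) hz

lemma gset_mono' (h0 : (0:ℤ) ∈ A) {i j : ℕ} (hij : i ≤ j) : gset A m i ⊆ gset A m j := by
  induction j with
  | zero => have : i = 0 := by omega
            subst this; exact subset_rfl
  | succ j ih =>
    rcases Nat.lt_or_ge i (j+1) with h | h
    · exact (ih (by omega)).trans (gset_mono A m h0 j)
    · have : i = j + 1 := by omega
      subst this; exact subset_rfl

lemma gset_add_mem {i j : ℕ} {x y : ZMod m} (hx : x ∈ gset A m i) (hy : y ∈ gset A m j) :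
    x + y ∈ gset A m (i + j) := by
  induction i generalizing x with
  | zero =>
    simp only [gset] at hx
    rw [Finset.mem_singleton] at hx
    subst hx
    rw [zero_add, zero_add]
    exact hy
  | succ i ih =>
    rw [gset_succ] at hx
    obtain ⟨a', ha', b, hb, rfl⟩ := Finset.mem_add.mp hx
    have : a' + b + y = a' + (b + y) := by ring
    rw [this, show i + 1 + j = (i + j) + 1 by omega, gset_succ]
    exact Finset.add_mem_add ha' (ih hb)

lemma gset_gen {a : ℤ} (ha : a ∈ A) : (a : ZMod m) ∈ gset A m 1 := by
  rw [gset_succ, show ((a:ZMod m)) = (a:ZMod m) + 0 by rw [add_zero]]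
  exact Finset.add_mem_add (Finset.mem_image.mpr ⟨a, ha, rfl⟩) (by simp [gset])

lemma gset_nsmul {j : ℕ} {x : ZMod m} (hx : x ∈ gset A m j) (c : ℕ) :
    c • x ∈ gset A m (c * j) := by
  induction c with
  | zero => simp [gset]
  | succ c ih =>
    rw [succ_nsmul, show (c+1) * j = c * j + j by ring]
    exact gset_add_mem A m ih hx
end Cover


section CoverB
variable (A : Finset ℤ) (m : ℕ) [NeZero m]

lemma gset_exists (hgcd : A.gcd id = 1) (z : ZMod m) : ∃ j, z ∈ gset A m j := by
  classical
  obtain ⟨f, hf⟩ := finset_bezout_s2 A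
  rw [hgcd] at hf
  have hterm : ∀ x ∈ A, ∃ j, (f x : ZMod m) * (x : ZMod m) ∈ gset A m j := by
    intro x hx
    set c : ℕ := ((f x) % (m:ℤ)).toNat with hc
    have hm0 : (0:ℤ) < (m:ℤ) := by
      have := NeZero.pos m
      exact_mod_cast this
    have hcnn : (c:ℤ) = (f x) % (m:ℤ) := Int.toNat_of_nonneg (Int.emod_nonneg _ (by omega))
    have hdvd : (m:ℤ) ∣ (f x - c) := by
      have hed := Int.emod_add_mul_ediv (f x) (m:ℤ)
      refine ⟨f x / (m:ℤ), by omega⟩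
    have hcast : (f x : ZMod m) = (c : ZMod m) := by
      have h0' : ((f x - (c:ℤ) : ℤ) : ZMod m) = 0 :=
        (ZMod.intCast_zmod_eq_zero_iff_dvd _ m).mpr hdvd
      push_cast at h0'
      linear_combination h0'
    refine ⟨c * 1, ?_⟩
    rw [hcast, show ((c:ℕ) : ZMod m) * (x : ZMod m) = c • (x : ZMod m) by rw [nsmul_eq_mul]]
    exact gset_nsmul A m (gset_gen A m hx) c
  have hsum : ∃ j, (∑ x ∈ A, ((f x : ZMod m) * (x : ZMod m))) ∈ gset A m j := by
    refine Finset.sum_induction _ (fun z => ∃ j, z ∈ gset A m j) ?_ ?_ hterm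
    · rintro a b ⟨i, hi⟩ ⟨j, hj⟩
      exact ⟨i + j, gset_add_mem A m hi hj⟩
    · exact ⟨0, by simp [gset]⟩
  have hone : (∑ x ∈ A, ((f x : ZMod m) * (x : ZMod m))) = (1 : ZMod m) := by
    have : (((∑ x ∈ A, f x * x : ℤ)) : ZMod m) = ((1:ℤ) : ZMod m) := by rw [hf]
    push_cast at this
    rw [← this]
  rw [hone] at hsum
  obtain ⟨J, hJ⟩ := hsum
  have h2 := gset_nsmul A m hJ z.val
  rw [show z.val • (1:ZMod m) = z by
    rw [nsmul_eq_mul, mul_one, ZMod.natCast_val, ZMod.cast_id]] at h2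
  exact ⟨_, h2⟩
end CoverB

section Cover2
variable (A : Finset ℤ) (m : ℕ) [NeZero m]

lemma gset_stab (h0 : (0:ℤ) ∈ A) {j : ℕ} (hstab : gset A m (j+1) ⊆ gset A m j) :
    ∀ i, j ≤ i → gset A m i = gset A m j := by
  intro i hij
  induction i with
  | zero => have : j = 0 := by omega
            rw [this]
  | succ i ih =>
    rcases Nat.lt_or_ge j (i+1) with h | h
    · have hi := ih (by omega)
      rw [gset_succ, hi, ← gset_succ]
      exact Finset.Subset.antisymm hstab (gset_mono A m h0 j)
    · have : j = i + 1 := by omega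
      rw [this]

lemma gset_univ (h0 : (0:ℤ) ∈ A) (hgcd : A.gcd id = 1) (z : ZMod m) : z ∈ gset A m (m - 1) := by
  classical
  -- growth
  have growth : ∀ j : ℕ, (∀ w : ZMod m, w ∈ gset A m j) ∨ j + 1 ≤ (gset A m j).card := by
    intro j
    induction j with
    | zero =>
      right
      simp [gset]
    | succ j ih =>
      rcases ih with hall | hcard
      · exact Or.inl (fun w => gset_mono A m h0 j (hall w))
      · by_cases hsub : gset A m (j+1) ⊆ gset A m j
        · left
          intro w
          obtain ⟨i, hi⟩ := gset_exists A m hgcd w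
          rcases le_or_gt i j with h | h
          · exact gset_mono A m h0 j (gset_mono' A m h0 h hi)
          · have := gset_stab A m h0 hsub i (by omega)
            exact gset_mono A m h0 j (this ▸ hi)
        · right
          have hss : gset A m j ⊂ gset A m (j+1) :=
            ⟨gset_mono A m h0 j, fun hc => hsub hc⟩
          have := Finset.card_lt_card hss
          omega
  rcases growth (m - 1) with hall | hcard
  · exact hall z
  · have hm : 1 ≤ m := NeZero.pos m
    have hcard' : m ≤ (gset A m (m-1)).card := by omega
    have : gset A m (m-1) = Finset.univ := by
      apply Finset.eq_univ_of_card
      have hle := Finset.card_le_univ (gset A m (m-1))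
      rw [ZMod.card m] at *
      omega
    rw [this]
    exact Finset.mem_univ z

lemma gset_extract (j : ℕ) (z : ZMod m) (hz : z ∈ gset A m j) :
    ∃ w : Multiset ℤ, (∀ x ∈ w, x ∈ A) ∧ w.card = j ∧ ((w.sum : ℤ) : ZMod m) = z := by
  classical
  induction j generalizing z with
  | zero =>
    simp only [gset, Finset.mem_singleton] at hz
    exact ⟨0, by simp, by simp, by simp [hz]⟩
  | succ j ih =>
    rw [gset_succ] at hz
    obtain ⟨a', ha', b, hb, rfl⟩ := Finset.mem_add.mp hz
    obtain ⟨a, haA, rfl⟩ := Finset.mem_image.mp ha'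
    obtain ⟨w, hw1, hw2, hw3⟩ := ih b hb
    refine ⟨a ::ₘ w, ?_, by simp [hw2], ?_⟩
    · intro x hx
      rcases Multiset.mem_cons.mp hx with h | h
      · exact h ▸ haA
      · exact hw1 x h
    · rw [Multiset.sum_cons, Int.cast_add, hw3]

lemma cover_lemma (h0 : (0:ℤ) ∈ A) (hgcd : A.gcd id = 1) (hm : 1 ≤ m) (n : ℤ) :
    ∃ w : Multiset ℤ, (∀ x ∈ w, x ∈ A) ∧ w.card = m - 1 ∧ (m:ℤ) ∣ (n - w.sum) := by
  obtain ⟨w, hw1, hw2, hw3⟩ := gset_extract A m (m-1) (n : ZMod m)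
    (gset_univ A m h0 hgcd (n : ZMod m))
  refine ⟨w, hw1, hw2, ?_⟩
  rw [← ZMod.intCast_zmod_eq_zero_iff_dvd, Int.cast_sub, hw3, sub_self]
end Cover2


lemma middle_lemma (A : Finset ℤ) (M a1 : ℤ) (hM : 2 ≤ M) (ha1 : 0 < a1) (ha1M : a1 < M)
    (h0 : (0:ℤ) ∈ A) (hMA : M ∈ A) (ha1A : a1 ∈ A) (hbd : ∀ x ∈ A, 0 ≤ x ∧ x ≤ M)
    (hgcd : A.gcd id = 1) (t : ℕ) (ht : 0 < t) (h : ℕ) (n : ℤ)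
    (hlo : ((t:ℤ)*M - 1)*M ≤ n) (hhi : n ≤ (h:ℤ)*M - ((t:ℤ)*M - 1)*M) :
    t ≤ repCount A h n := by
  classical
  set m : ℕ := M.toNat with hmdef
  have hmM : (m:ℤ) = M := Int.toNat_of_nonneg (by omega)
  have hm2 : 2 ≤ m := by omega
  haveI : NeZero m := ⟨by omega⟩
  obtain ⟨w, hw1, hw2, hw3⟩ := cover_lemma A m h0 hgcd (by omega) n
  have hws0 : 0 ≤ w.sum := Multiset.sum_nonneg (fun x hx => (hbd x (hw1 x hx)).1)
  have hwsM : w.sum ≤ ((m:ℤ) - 1) * M := by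
    have hle := Multiset.sum_le_card_nsmul w M (fun x hx => (hbd x (hw1 x hx)).2)
    rw [hw2, nsmul_eq_mul] at hle
    have hcast : (((m - 1 : ℕ)):ℤ) = (m:ℤ) - 1 := by omega
    rw [hcast] at hle
    exact hle
  obtain ⟨q, hq⟩ : (M:ℤ) ∣ (n - w.sum) := by rw [← hmM]; exact hw3
  have hMpos : (0:ℤ) < M := by omega
  have htpos : (1:ℤ) ≤ (t:ℤ) := by exact_mod_cast ht
  have hq1 : ((t:ℤ) - 1) * M ≤ q := by nlinarith
  have hq2 : q ≤ (h:ℤ) - ((t:ℤ)*M - 1) := by nlinarith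
  have hq0 : 0 ≤ q := by nlinarith
  -- plain multiset family
  set W : ℕ → Multiset ℤ := fun j =>
      w + Multiset.replicate (q - (j:ℤ)*a1).toNat M
        + Multiset.replicate (j * m) a1
        + Multiset.replicate (h - ((m-1) + (q - (j:ℤ)*a1).toNat + j * m)) 0 with hW
  have hjfacts : ∀ j, j < t → ((j:ℤ)*a1 ≤ q ∧
      (((q - (j:ℤ)*a1).toNat : ℕ) : ℤ) = q - (j:ℤ)*a1 ∧
      (m-1) + (q - (j:ℤ)*a1).toNat + j * m ≤ h) := by
    intro j hj
    have hjt : (j:ℤ) ≤ (t:ℤ) - 1 := by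
      have hcc : (j:ℤ) < (t:ℤ) := by exact_mod_cast hj
      omega
    have hja1 : (j:ℤ)*a1 ≤ q := by nlinarith
    have hQ : (((q - (j:ℤ)*a1).toNat : ℕ) : ℤ) = q - (j:ℤ)*a1 :=
      Int.toNat_of_nonneg (by omega)
    refine ⟨hja1, hQ, ?_⟩
    have hz : ((m:ℤ)-1) + (q - (j:ℤ)*a1) + (j:ℤ) * m ≤ (h:ℤ) := by
      rw [hmM]; nlinarith
    have h2 : (((m-1) + (q - (j:ℤ)*a1).toNat + j * m : ℕ) : ℤ) ≤ (h:ℤ) := by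
      push_cast [hQ]
      push_cast at hz
      omega
    exact_mod_cast h2
  have hcardW : ∀ j, j < t → Multiset.card (W j) = h := by
    intro j hj
    obtain ⟨hja1, hQ, hle⟩ := hjfacts j hj
    rw [hW]
    simp only [Multiset.card_add, Multiset.card_replicate, hw2]
    omega
  have hsumW : ∀ j, j < t → (W j).sum = n := by
    intro j hj
    obtain ⟨hja1, hQ, hle⟩ := hjfacts j hj
    rw [hW]
    simp only [Multiset.sum_add, Multiset.sum_replicate, smul_zero, add_zero, nsmul_eq_mul]
    rw [hQ]
    have hjm : (((j * m : ℕ)):ℤ) = (j:ℤ) * M := by push_cast [hmM]; ring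
    rw [hjm]
    linear_combination (-1 : ℤ) * hq
  have hmemW : ∀ j, j < t → ∀ x ∈ W j, x ∈ A := by
    intro j hj x hx
    rw [hW] at hx
    rcases Multiset.mem_add.mp hx with hx2 | hx2
    · rcases Multiset.mem_add.mp hx2 with hx3 | hx3
      · rcases Multiset.mem_add.mp hx3 with hx4 | hx4
        · exact hw1 x hx4
        · rw [Multiset.eq_of_mem_replicate hx4]; exact hMA
      · rw [Multiset.eq_of_mem_replicate hx3]; exact ha1A
    · rw [Multiset.eq_of_mem_replicate hx2]; exact h0
  have hcountW : ∀ j, j < t → (W j).count a1 = w.count a1 + j * m := by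
    intro j hj
    rw [hW]
    simp only [Multiset.count_add, Multiset.count_replicate]
    rw [if_neg (show ¬ M = a1 by omega), if_neg (show ¬ (0:ℤ) = a1 by omega), if_pos trivial]
    omega
  set F : ℕ → Sym ℤ h := fun j =>
    if hj : j < t then ⟨W j, hcardW j hj⟩ else ⟨Multiset.replicate h 0, by simp⟩ with hF
  have hFj : ∀ j, (hj : j < t) → Sym.toMultiset (F j) = W j := by
    intro j hj
    rw [hF]
    simp only [dif_pos hj]
    exact (congrArg Sym.toMultiset (dif_pos hj)).trans rfl
  have hmaps : ∀ j ∈ Finset.range t,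
      F j ∈ (A.sym h).filter (fun s => (Sym.toMultiset s).sum = n) := by
    intro j hjr
    have hj : j < t := Finset.mem_range.mp hjr
    rw [Finset.mem_filter]
    constructor
    · rw [Finset.mem_sym_iff]
      intro x hx
      have hx' : x ∈ Sym.toMultiset (F j) := Sym.mem_coe.mp hx
      rw [hFj j hj] at hx'
      exact hmemW j hj x hx'
    · show (Sym.toMultiset (F j)).sum = n
      rw [hFj j hj]
      exact hsumW j hj
  have hinj : Set.InjOn F (Finset.range t) := by
    intro j1 hj1 j2 hj2 heq
    have hj1' : j1 < t := Finset.mem_range.mp (by exact_mod_cast hj1)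
    have hj2' : j2 < t := Finset.mem_range.mp (by exact_mod_cast hj2)
    have h1 := hcountW j1 hj1'
    have h2 := hcountW j2 hj2'
    rw [← hFj j1 hj1', heq, hFj j2 hj2', h2] at h1
    have hm' : j1 * m = j2 * m := by omega
    exact Nat.eq_of_mul_eq_mul_right (by omega) hm'
  calc t = (Finset.range t).card := (Finset.card_range t).symm
    _ ≤ _ := Finset.card_le_card_of_injOn F hmaps hinj

lemma threshold (p : ℤ → ℕ) (t : ℕ) (ht : 0 < t) (cb : ℤ) (hcb : 0 ≤ cb)
    (htop : t ≤ p cb) (hneg : ¬ t ≤ p (-1)) :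
    ∃ c : ℤ, 0 ≤ c ∧ c ≤ cb + 1 ∧ (∀ n, c ≤ n → n ≤ cb → t ≤ p n) ∧ ¬ t ≤ p (c - 1) := by
  classical
  set Q : ℕ → Prop := fun j => ∀ n : ℤ, cb - j ≤ n → n ≤ cb → t ≤ p n with hQdef
  have hE : ∃ j, ¬ Q j := by
    refine ⟨(cb + 1).toNat, fun hQ => hneg (hQ (-1) ?_ ?_)⟩ <;> omega
  set j1 := Nat.find hE with hj1
  have hspec : ¬ Q j1 := Nat.find_spec hE
  have hj1pos : j1 ≠ 0 := by
    intro h0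
    apply hspec
    rw [h0]
    intro n h1 h2
    have : n = cb := by push_cast at h1; omega
    rwa [this]
  have hQ' : Q (j1 - 1) := by
    by_contra hc
    have hle : j1 ≤ j1 - 1 := Nat.find_le hc
    omega
  set c : ℤ := cb - j1 + 1 with hc
  have hj1z : ((j1 - 1 : ℕ) : ℤ) = (j1 : ℤ) - 1 := by omega
  have hmid : ∀ n, c ≤ n → n ≤ cb → t ≤ p n := by
    intro n h1 h2
    refine hQ' n ?_ h2
    rw [hj1z]
    omega
  have hc0 : 0 ≤ c := by
    by_contra hcneg
    exact hneg (hmid (-1) (by omega) (by omega))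
  have hbad : ¬ t ≤ p (c - 1) := by
    simp only [hQdef] at hspec
    push_neg at hspec
    obtain ⟨n, h1, h2, h3⟩ := hspec
    have : n = c - 1 := by
      rcases lt_or_ge n c with h | h
      · omega
      · exact absurd (hmid n h h2) (by omega)
    rw [← this]; omega
  exact ⟨c, hc0, by omega, hmid, hbad⟩

theorem stmt2 (k : ℕ) (hk : 2 ≤ k) (a : ℕ → ℤ)
    (ha0 : a 0 = 0) (hmono : ∀ i j, i ≤ k → j ≤ k → i < j → a i < a j)
    (A : Finset ℤ) (hA : A = (Finset.range (k + 1)).image a)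
    (hgcd : A.gcd id = 1)
    (t : ℕ) (ht : 0 < t)
    (h_t : ℕ) (hh_t : (h_t : ℤ) = ((k : ℤ) - 1) * ((t : ℤ) * a k - 1) * a k + 1) :
    ∃ c d : ℤ, 0 ≤ c ∧ 0 ≤ d ∧ ∃ C D : Finset ℤ,
      ↑C ⊆ Set.Icc (0 : ℤ) (c - 2) ∧ ↑D ⊆ Set.Icc (0 : ℤ) (d - 2) ∧
      ∀ h : ℕ, h_t ≤ h →
        sumsetT A h t =
          ↑C ∪ Set.Icc c ((h : ℤ) * a k - d) ∪ ((fun x => (h : ℤ) * a k - x) '' ↑D) := by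
  classical
  set M : ℤ := a k with hMdef
  have ha1pos : 0 < a 1 := by
    have := hmono 0 1 (by omega) (by omega) (by omega)
    omega
  have ha1M : a 1 < M := hmono 1 k (by omega) (le_refl k) (by omega)
  have hM2 : 2 ≤ M := by omega
  have h0A : (0:ℤ) ∈ A := by
    rw [hA]
    exact Finset.mem_image.mpr ⟨0, Finset.mem_range.mpr (by omega), ha0⟩
  have hMA : M ∈ A := by
    rw [hA]
    exact Finset.mem_image.mpr ⟨k, Finset.mem_range.mpr (by omega), rfl⟩
  have ha1A : a 1 ∈ A := by
    rw [hA]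
    exact Finset.mem_image.mpr ⟨1, Finset.mem_range.mpr (by omega), rfl⟩
  have hbd : ∀ x ∈ A, 0 ≤ x ∧ x ≤ M := by
    intro x hx
    rw [hA] at hx
    obtain ⟨i, hi, rfl⟩ := Finset.mem_image.mp hx
    have hik : i ≤ k := by
      have := Finset.mem_range.mp hi
      omega
    constructor
    · rcases Nat.eq_zero_or_pos i with h | h
      · subst h; omega
      · have := hmono 0 i (by omega) hik (by omega)
        omega
    · rcases eq_or_lt_of_le hik with h | h
      · subst h; omega
      · exact le_of_lt (hmono i k hik (le_refl k) h)
  have hposA : ∀ x ∈ A, 0 ≤ x := fun x hx => (hbd x hx).1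
  set B : Finset ℤ := A.image (fun x => M - x) with hBdef
  have h0B : (0:ℤ) ∈ B := Finset.mem_image.mpr ⟨M, hMA, by ring⟩
  have hposB : ∀ x ∈ B, 0 ≤ x := by
    intro x hx
    obtain ⟨y, hy, rfl⟩ := Finset.mem_image.mp hx
    have := (hbd y hy).2
    omega
  set cb : ℤ := ((t:ℤ) * M - 1) * M with hcbdef
  have htZ : (1:ℤ) ≤ (t:ℤ) := by exact_mod_cast ht
  have htM : 2 ≤ (t:ℤ)*M := by nlinarith
  have hcb0 : 0 ≤ cb := mul_nonneg (by omega) (by omega)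
  have hkZ : (2:ℤ) ≤ (k:ℤ) := by exact_mod_cast hk
  have hht1 : cb + 1 ≤ (h_t:ℤ) := by nlinarith [hh_t]
  set p : ℤ → ℕ := fun n => repCount A n.toNat n with hpdef
  set pB : ℤ → ℕ := fun n => repCount B n.toNat n with hpBdef
  have hstabA : ∀ (hh : ℕ) (n : ℤ), 0 ≤ n → n ≤ (hh:ℤ) → repCount A hh n = p n := by
    intro hh n h1 h2
    exact repCount_stable A h0A hposA n n.toNat hh (by omega) (by omega)
  have hstabB : ∀ (hh : ℕ) (n : ℤ), 0 ≤ n → n ≤ (hh:ℤ) → repCount B hh n = pB n := by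
    intro hh n h1 h2
    exact repCount_stable B h0B hposB n n.toNat hh (by omega) (by omega)
  have hmidA : ∀ (hh : ℕ) (n : ℤ), cb ≤ n → n ≤ (hh:ℤ)*M - cb → t ≤ repCount A hh n := by
    intro hh n h1 h2
    exact middle_lemma A M (a 1) hM2 ha1pos ha1M h0A hMA ha1A hbd hgcd t ht hh n h1 h2
  have hreflect : ∀ (hh : ℕ) (n : ℤ), repCount A hh n = repCount B hh ((hh:ℤ)*M - n) :=
    fun hh n => repCount_reflect A M hh n
  have hhtM : 2*cb + 2 ≤ (h_t:ℤ)*M := by nlinarith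
  have htopA : t ≤ p cb := by
    rw [← hstabA h_t cb hcb0 (by omega)]
    exact hmidA h_t cb le_rfl (by omega)
  have htopB : t ≤ pB cb := by
    rw [← hstabB h_t cb hcb0 (by omega)]
    have hmm := hmidA h_t ((h_t:ℤ)*M - cb) (by omega) (by omega)
    rw [hreflect h_t ((h_t:ℤ)*M - cb),
      show (h_t:ℤ)*M - ((h_t:ℤ)*M - cb) = cb by ring] at hmm
    exact hmm
  have hnegA : ¬ t ≤ p (-1) := by
    have : p (-1) = repCount A ((-1:ℤ)).toNat (-1) := rfl
    rw [this, repCount_eq_zero_of_neg A hposA _ (-1) (by omega)]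
    omega
  have hnegB : ¬ t ≤ pB (-1) := by
    have : pB (-1) = repCount B ((-1:ℤ)).toNat (-1) := rfl
    rw [this, repCount_eq_zero_of_neg B hposB _ (-1) (by omega)]
    omega
  obtain ⟨c, hc0, hcle, hcmid, hcbad⟩ := threshold p t ht cb hcb0 htopA hnegA
  obtain ⟨d, hd0, hdle, hdmid, hdbad⟩ := threshold pB t ht cb hcb0 htopB hnegB
  set C : Finset ℤ := (Finset.Icc 0 (c-1)).filter (fun n => t ≤ p n) with hCdef
  set D : Finset ℤ := (Finset.Icc 0 (d-1)).filter (fun n => t ≤ pB n) with hDdef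
  have hCn : ∀ x : ℤ, x ∈ C ↔ (0 ≤ x ∧ x ≤ c - 1 ∧ t ≤ p x) := by
    intro x
    rw [hCdef, Finset.mem_filter, Finset.mem_Icc]
    tauto
  have hDn : ∀ x : ℤ, x ∈ D ↔ (0 ≤ x ∧ x ≤ d - 1 ∧ t ≤ pB x) := by
    intro x
    rw [hDdef, Finset.mem_filter, Finset.mem_Icc]
    tauto
  refine ⟨c, d, hc0, hd0, C, D, ?_, ?_, ?_⟩
  · intro x hx
    rw [Finset.mem_coe, hCn] at hx
    rw [Set.mem_Icc]
    refine ⟨hx.1, ?_⟩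
    rcases eq_or_lt_of_le hx.2.1 with h | h
    · exact absurd (h ▸ hx.2.2) hcbad
    · omega
  · intro x hx
    rw [Finset.mem_coe, hDn] at hx
    rw [Set.mem_Icc]
    refine ⟨hx.1, ?_⟩
    rcases eq_or_lt_of_le hx.2.1 with h | h
    · exact absurd (h ▸ hx.2.2) hdbad
    · omega
  · intro h hh
    have hhZ : (h_t:ℤ) ≤ (h:ℤ) := by exact_mod_cast hh
    have hcbh : cb + 1 ≤ (h:ℤ) := le_trans hht1 hhZ
    have hhM : 2*cb + 2 ≤ (h:ℤ)*M := by nlinarith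
    ext n
    simp only [sumsetT, Set.mem_setOf_eq, Set.mem_union, Set.mem_Icc, Set.mem_image,
      Finset.mem_coe]
    constructor
    · intro hrep
      have hn0 : 0 ≤ n := by
        by_contra hc
        rw [repCount_eq_zero_of_neg A hposA h n (by omega)] at hrep
        omega
      have hnM : n ≤ (h:ℤ)*M := by
        by_contra hc
        rw [repCount_eq_zero_of_gt A M (fun x hx => (hbd x hx).2) h n (by omega)] at hrep
        omega
      rcases lt_or_ge n c with h1 | h1
      · left; left
        rw [hCn]
        refine ⟨hn0, by omega, ?_⟩
        rw [← hstabA h n hn0 (by omega)]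
        exact hrep
      · rcases le_or_gt n ((h:ℤ)*M - d) with h2 | h2
        · left; right; exact ⟨h1, h2⟩
        · right
          refine ⟨(h:ℤ)*M - n, ?_, by ring⟩
          rw [hDn]
          refine ⟨by omega, by omega, ?_⟩
          rw [← hstabB h ((h:ℤ)*M - n) (by omega) (by omega)]
          rw [← hreflect h n]
          exact hrep
    · intro hrhs
      rcases hrhs with (hC | hmid) | htopcase
      · rw [hCn] at hC
        rw [hstabA h n hC.1 (by omega)]
        exact hC.2.2
      · obtain ⟨h1, h2⟩ := hmid
        rcases le_or_gt n cb with h3 | h3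
        · rw [hstabA h n (by omega) (by omega)]
          exact hcmid n h1 h3
        · rcases le_or_gt n ((h:ℤ)*M - cb) with h4 | h4
          · exact hmidA h n (by omega) h4
          · rw [hreflect h n, hstabB h ((h:ℤ)*M - n) (by omega) (by omega)]
            exact hdmid ((h:ℤ)*M - n) (by omega) (by omega)
      · obtain ⟨x, hx, hxn⟩ := htopcase
        rw [hDn] at hx
        rw [← hxn, hreflect h ((h:ℤ)*M - x),
          show (h:ℤ)*M - ((h:ℤ)*M - x) = x by ring,
          hstabB h x hx.1 (by omega)]
        exact hx.2.2
end

section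
/- Let k ≥ 2 and A = {a_0, ..., a_k} with 0 = a_0 < a_1 < ... < a_k and gcd(A) = 1. For every positive integer t and every integer n ≥ (t·a_k − 1)·(a_1 + ... + a_{k−1}), there exist t distinct k-tuples (x_1, ..., x_k) of nonnegative integers with n = x_1·a_1 + ... + x_k·a_k; i.e., n has at least t distinct representations as a nonnegative integer linear combination of a_1, ..., a_k. -/
open Finset

private lemma exists_bezout_aux (S : Finset ℕ) (f : ℕ → ℤ) :
    ∃ c : ℕ → ℤ, ∑ i ∈ S, c i * f i = S.gcd f := by
  classical
  induction S using Finset.induction_on with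
  | empty => exact ⟨fun _ => 0, by simp⟩
  | @insert b S hb ih =>
    obtain ⟨c, hc⟩ := ih
    refine ⟨Function.update (fun i => Int.gcdB (f b) (S.gcd f) * c i) b
      (Int.gcdA (f b) (S.gcd f)), ?_⟩
    rw [Finset.sum_insert hb, Finset.gcd_insert, ← Int.coe_gcd, Int.gcd_eq_gcd_ab,
      Function.update_self]
    have h1 : ∑ i ∈ S, Function.update (fun i => Int.gcdB (f b) (S.gcd f) * c i) b
        (Int.gcdA (f b) (S.gcd f)) i * f i
        = ∑ i ∈ S, Int.gcdB (f b) (S.gcd f) * c i * f i := by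
      refine Finset.sum_congr rfl fun i hi => ?_
      rw [Function.update_of_ne (by rintro rfl; exact hb hi)]
    have h2 : ∑ i ∈ S, Int.gcdB (f b) (S.gcd f) * c i * f i
        = Int.gcdB (f b) (S.gcd f) * ∑ i ∈ S, c i * f i := by
      rw [Finset.mul_sum]
      exact Finset.sum_congr rfl fun i _ => (mul_assoc _ _ _)
    rw [h1, h2, hc]; ring

theorem stmt8 (k : ℕ) (hk : 2 ≤ k) (a : ℕ → ℤ)
    (ha0 : a 0 = 0) (hmono : ∀ i j, i ≤ k → j ≤ k → i < j → a i < a j)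
    (hgcd : ((Finset.range (k + 1)).image a).gcd id = 1)
    (t : ℕ) (ht : 0 < t)
    (n : ℤ) (hn : ((t : ℤ) * a k - 1) * ∑ j ∈ Finset.Icc 1 (k - 1), a j ≤ n) :
    ∃ S : Finset (Fin k → ℕ), S.card = t ∧
      ∀ x ∈ S, ∑ j : Fin k, (x j : ℤ) * a (j.val + 1) = n := by
  classical
  have hak : 0 < a k := by
    have := hmono 0 k (Nat.zero_le _) le_rfl (by omega); omega
  have hapos : ∀ j, 1 ≤ j → j ≤ k → 0 < a j := by
    intro j h1 h2
    have := hmono 0 j (Nat.zero_le _) h2 (by omega); omega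
  have hIccIco : Finset.Icc 1 (k - 1) = Finset.Ico 1 k := by
    rw [← Finset.Ico_add_one_right_eq_Icc]
    congr 1; omega
  set s : ℤ := ∑ j ∈ Finset.Icc 1 (k - 1), a j with hs_def
  have hsIco : s = ∑ j ∈ Finset.Ico 1 k, a j := by rw [hs_def, hIccIco]
  have hs_ge : a 1 ≤ s := by
    rw [hsIco, Finset.sum_eq_sum_Ico_succ_bot (by omega : 1 < k)]
    have h2 : 0 ≤ ∑ j ∈ Finset.Ico (1 + 1) k, a j :=
      Finset.sum_nonneg fun j hj => by
        have := Finset.mem_Ico.mp hj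
        exact le_of_lt (hapos j (by omega) (by omega))
    linarith
  -- Bezout coefficients
  have hgcd' : (Finset.range (k + 1)).gcd a = 1 := by
    rw [Finset.gcd_image] at hgcd; exact hgcd
  obtain ⟨c, hc⟩ := exists_bezout_aux (Finset.range (k + 1)) a
  rw [hgcd'] at hc
  have hnrep : ∑ j ∈ Finset.range (k + 1), (n * c j) * a j = n := by
    have h : ∑ j ∈ Finset.range (k + 1), (n * c j) * a j
        = n * ∑ j ∈ Finset.range (k + 1), c j * a j := by
      rw [Finset.mul_sum]
      exact Finset.sum_congr rfl fun j _ => (mul_assoc _ _ _)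
    rw [h, hc, mul_one]
  set X : ℕ → ℤ := fun j => (n * c j) % a k with hX_def
  have hX0 : ∀ j, 0 ≤ X j := fun j => Int.emod_nonneg _ (ne_of_gt hak)
  have hX1 : ∀ j, X j < a k := fun j => Int.emod_lt_of_pos _ hak
  set r : ℤ := ∑ j ∈ Finset.Ico 1 k, X j * a j with hr_def
  have hsplit0 : ∑ j ∈ Finset.range (k + 1), (n * c j) * a j
      = ∑ j ∈ Finset.Ico 1 k, (n * c j) * a j + (n * c k) * a k := by
    rw [Finset.range_eq_Ico, Finset.sum_Ico_succ_top (Nat.zero_le _),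
      Finset.sum_eq_sum_Ico_succ_bot (by omega : 0 < k), ha0]
    ring
  have hsplit : n = ∑ j ∈ Finset.Ico 1 k, (n * c j) * a j + (n * c k) * a k :=
    hnrep.symm.trans hsplit0
  have hdvd : a k ∣ n - r := by
    have hsub : ∑ j ∈ Finset.Ico 1 k, ((n * c j) - X j) * a j
        = ∑ j ∈ Finset.Ico 1 k, (n * c j) * a j - ∑ j ∈ Finset.Ico 1 k, X j * a j := by
      rw [← Finset.sum_sub_distrib]
      exact Finset.sum_congr rfl fun j _ => by ring
    have key : n - r = ∑ j ∈ Finset.Ico 1 k, ((n * c j) - X j) * a j + (n * c k) * a k := by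
      rw [hsub]; linarith [hsplit]
    rw [key]
    refine dvd_add (Finset.dvd_sum fun j hj => ?_) ⟨n * c k, by ring⟩
    refine Dvd.dvd.mul_right ⟨n * c j / a k, ?_⟩ _
    simp only [hX_def, Int.emod_def]; ring
  set y : ℤ := (n - r) / a k with hy_def
  have hy : a k * y = n - r := Int.mul_ediv_cancel' hdvd
  have hr0 : 0 ≤ r :=
    Finset.sum_nonneg fun j hj => by
      have := Finset.mem_Ico.mp hj
      exact mul_nonneg (hX0 j) (le_of_lt (hapos j (by omega) (by omega)))
  have hr1 : r ≤ (a k - 1) * s := by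
    rw [hsIco, Finset.mul_sum, hr_def]
    refine Finset.sum_le_sum fun j hj => ?_
    have := Finset.mem_Ico.mp hj
    exact mul_le_mul_of_nonneg_right (by have := hX1 j; omega)
      (le_of_lt (hapos j (by omega) (by omega)))
  have hs0 : 0 ≤ s := le_trans (le_of_lt (hapos 1 le_rfl (by omega))) hs_ge
  have hy0 : ((t : ℤ) - 1) * s ≤ y := by
    have h1 : a k * (((t : ℤ) - 1) * s) ≤ a k * y := by
      rw [hy]
      nlinarith [hn, hr1]
    exact le_of_mul_le_mul_left h1 hak
  set V : ℕ → ℕ → ℕ := fun i j =>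
    if j = 0 then (X 1 + i * a k).toNat
    else if j = k - 1 then (y - i * a 1).toNat else (X (j + 1)).toNat with hV_def
  have hyi : ∀ i : ℕ, i < t → 0 ≤ y - (i : ℤ) * a 1 := by
    intro i hi
    have hi' : (i : ℤ) ≤ (t : ℤ) - 1 := by
      have : (i : ℤ) < (t : ℤ) := by exact_mod_cast hi
      omega
    have ha1 : 0 < a 1 := hapos 1 le_rfl (by omega)
    nlinarith [hy0, hs_ge]
  have hx1i : ∀ i : ℕ, (0 : ℤ) ≤ X 1 + i * a k := by
    intro i
    have h1 : (0 : ℤ) ≤ (i : ℤ) * a k := mul_nonneg (Int.natCast_nonneg i) (le_of_lt hak)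
    have h2 := hX0 1
    linarith
  refine ⟨(Finset.range t).image (fun i => fun j : Fin k => V i j.val), ?_, ?_⟩
  · rw [Finset.card_image_of_injOn, Finset.card_range]
    intro i _ i' _ hii
    have h0 : V i 0 = V i' 0 := congrFun hii ⟨0, by omega⟩
    have h0' : (X 1 + (i : ℤ) * a k).toNat = (X 1 + (i' : ℤ) * a k).toNat := by
      simpa [hV_def] using h0
    have h0'' : X 1 + (i : ℤ) * a k = X 1 + (i' : ℤ) * a k := by
      rw [← Int.toNat_of_nonneg (hx1i i), ← Int.toNat_of_nonneg (hx1i i'), h0']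
    have h3 : (i : ℤ) * a k = (i' : ℤ) * a k := by linarith
    have h4 : (i : ℤ) = (i' : ℤ) := mul_right_cancel₀ (ne_of_gt hak) h3
    exact_mod_cast h4
  · intro x hx
    obtain ⟨i, hi, rfl⟩ := Finset.mem_image.mp hx
    rw [Finset.mem_range] at hi
    refine Eq.trans (Fin.sum_univ_eq_sum_range (fun j => (V i j : ℤ) * a (j + 1)) k) ?_
    have hk1 : k = (k - 1) + 1 := by omega
    rw [Finset.range_eq_Ico, Finset.sum_eq_sum_Ico_succ_bot (by omega : 0 < k)]
    have e2 : ∑ j ∈ Finset.Ico (0 + 1) k, (V i j : ℤ) * a (j + 1)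
        = ∑ j ∈ Finset.Ico 1 (k - 1), (V i j : ℤ) * a (j + 1)
          + (V i (k - 1) : ℤ) * a ((k - 1) + 1) := by
      conv_lhs => rw [show Finset.Ico (0 + 1) k = Finset.Ico 1 ((k - 1) + 1) by rw [← hk1]]
      exact Finset.sum_Ico_succ_top (by omega) _
    rw [e2]
    have e3 : ∑ j ∈ Finset.Ico 1 (k - 1), (V i j : ℤ) * a (j + 1)
        = ∑ j ∈ Finset.Ico 2 k, X j * a j := by
      have hmap : Finset.Ico 2 k = Finset.map (addRightEmbedding 1) (Finset.Ico 1 (k - 1)) := by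
        rw [Finset.map_add_right_Ico]
        congr 1 <;> omega
      rw [hmap, Finset.sum_map]
      refine Finset.sum_congr rfl fun j hj => ?_
      have hj' := Finset.mem_Ico.mp hj
      simp only [addRightEmbedding_apply]
      have hVj : V i j = (X (j + 1)).toNat := by
        simp only [hV_def]
        rw [if_neg (by omega), if_neg (by omega)]
      rw [hVj, Int.toNat_of_nonneg (hX0 _)]
    rw [e3]
    have hV0 : (V i 0 : ℤ) = X 1 + i * a k := by
      have hv : V i 0 = (X 1 + i * a k).toNat := by simp [hV_def]
      rw [hv, Int.toNat_of_nonneg (hx1i i)]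
    have hVk : (V i (k - 1) : ℤ) = y - i * a 1 := by
      have hv : V i (k - 1) = (y - i * a 1).toNat := by
        simp only [hV_def]
        rw [if_neg (by omega : ¬(k - 1 = 0))]
        simp
      rw [hv, Int.toNat_of_nonneg (hyi i hi)]
    have hrsplit : r = X 1 * a 1 + ∑ j ∈ Finset.Ico (1 + 1) k, X j * a j := by
      rw [hr_def, Finset.sum_eq_sum_Ico_succ_bot (by omega : 1 < k)]
    have hrsplit' : r = X 1 * a 1 + ∑ j ∈ Finset.Ico 2 k, X j * a j := by
      rw [hrsplit]
    have hkk : (k - 1) + 1 = k := by omega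
    rw [hV0, hVk, hkk]
    have hfinal : X 1 * a 1 + ∑ j ∈ Finset.Ico 2 k, X j * a j + a k * y = n := by
      rw [← hrsplit', hy]; ring
    linear_combination hfinal
end

section
/- Let A be a finite set of integers with min(A) = 0, max(A) = a_k > 0, and gcd(A) = 1. Suppose for some h that (hA)^{(t)} ⊇ [c, h·a_k − d] where c, d are nonnegative integers with c + d ≤ a_k·(h−1). Then (h+1)A)^{(t)} ⊇ [c, (h+1)·a_k − d]. -/
open Finset

lemma repCount_le_cons (A : Finset ℤ) (x : ℤ) (hx : x ∈ A) (h : ℕ) (n : ℤ) :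
    repCount A h n ≤ repCount A (h + 1) (n + x) := by
  apply Finset.card_le_card_of_injOn (fun m => x ::ₛ m)
  · intro m hm
    simp only [Finset.mem_coe, Finset.mem_filter, Finset.mem_sym_iff] at hm ⊢
    refine ⟨fun a ha => ?_, ?_⟩
    · rcases Sym.mem_cons.mp ha with rfl | ha
      · exact hx
      · exact hm.1 a ha
    · have : (Sym.toMultiset (x ::ₛ m)) = x ::ₘ Sym.toMultiset m := rfl
      rw [this, Multiset.sum_cons, hm.2, add_comm]
  · intro m₁ _ m₂ _ heq
    exact Subtype.ext ((Multiset.cons_inj_right x).mp (congrArg Sym.toMultiset heq))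

theorem stmt10 (A : Finset ℤ) (hne : A.Nonempty)
    (hmin : A.min' hne = 0) (ak : ℤ) (hak : ak = A.max' hne) (hakpos : 0 < ak)
    (hgcd : A.gcd id = 1)
    (h t : ℕ) (hh : 0 < h) (ht : 0 < t)
    (c d : ℤ) (hc : 0 ≤ c) (hd : 0 ≤ d) (hcd : c + d ≤ ak * ((h : ℤ) - 1))
    (hsub : Set.Icc c ((h : ℤ) * ak - d) ⊆ sumsetT A h t) :
    Set.Icc c (((h : ℤ) + 1) * ak - d) ⊆ sumsetT A (h + 1) t := by
  have h0 : (0 : ℤ) ∈ A := hmin ▸ A.min'_mem hne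
  have hakA : ak ∈ A := hak ▸ A.max'_mem hne
  intro n hn
  obtain ⟨hn1, hn2⟩ := hn
  by_cases hcase : n ≤ (h : ℤ) * ak - d
  · have := hsub ⟨hn1, hcase⟩
    have hrep : t ≤ repCount A h n := this
    have := repCount_le_cons A 0 h0 h n
    simp only [add_zero] at this
    exact le_trans hrep this
  · push_neg at hcase
    have hmem : n - ak ∈ Set.Icc c ((h : ℤ) * ak - d) := by
      constructor
      · nlinarith
      · linarith
    have hrep : t ≤ repCount A h (n - ak) := hsub hmem
    have := repCount_le_cons A ak hakA h (n - ak)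
    rw [sub_add_cancel] at this
    exact le_trans hrep this
end

section
/- Let A = {a_0, a_1, ..., a_k} be a finite set of integers with 0 = a_0 < a_1 < ... < a_k and gcd(A) = 1. With h_1 = (k−1)(a_k−1)·a_k + 1, there exist nonnegative integers c_1, d_1 and finite sets C_1 ⊆ [0, c_1 − 2], D_1 ⊆ [0, d_1 − 2] such that hA = C_1 ∪ [c_1, h·a_k − d_1] ∪ (h·a_k − D_1) for all h ≥ h_1. -/
open Finset

lemma mem_sumsetT_iff {A : Finset ℤ} {h : ℕ} {n : ℤ} :
    n ∈ sumsetT A h 1 ↔ ∃ m : Multiset ℤ, Multiset.card m = h ∧ (∀ x ∈ m, x ∈ A) ∧ m.sum = n := by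
  unfold sumsetT repCount
  rw [Set.mem_setOf_eq, Nat.one_le_iff_ne_zero, ← Nat.pos_iff_ne_zero, Finset.card_pos]
  constructor
  · rintro ⟨m, hm⟩
    rw [Finset.mem_filter, Finset.mem_sym_iff] at hm
    exact ⟨m.toMultiset, m.2, fun x hx => hm.1 x (by simpa [Sym.mem_coe] using hx), hm.2⟩
  · rintro ⟨m, hc, hmem, hs⟩
    refine ⟨Sym.mk m hc, ?_⟩
    rw [Finset.mem_filter, Finset.mem_sym_iff]
    exact ⟨fun x hx => hmem x (by simpa using hx), hs⟩

/-- positive-part semigroup -/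
def SS (A : Finset ℤ) : Set ℤ :=
  {n | ∃ m : Multiset ℤ, (∀ x ∈ m, x ∈ A) ∧ (∀ x ∈ m, 0 < x) ∧ m.sum = n}

lemma pad_mem {A : Finset ℤ} (h0 : (0:ℤ) ∈ A) {h : ℕ} {n : ℤ}
    (m : Multiset ℤ) (hc : Multiset.card m ≤ h) (hmem : ∀ x ∈ m, x ∈ A) (hs : m.sum = n) :
    n ∈ sumsetT A h 1 := by
  refine mem_sumsetT_iff.mpr ⟨m + Multiset.replicate (h - Multiset.card m) 0, ?_, ?_, ?_⟩
  · simp [Multiset.card_replicate]; omega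
  · intro x hx
    rcases Multiset.mem_add.mp hx with hx | hx
    · exact hmem x hx
    · rw [Multiset.eq_of_mem_replicate hx]; exact h0
  · simp [hs]

lemma card_le_sum_of_pos {m : Multiset ℤ} (hp : ∀ x ∈ m, 0 < x) :
    (Multiset.card m : ℤ) ≤ m.sum := by
  induction m using Multiset.induction with
  | empty => simp
  | cons x s ih =>
    simp only [Multiset.card_cons, Multiset.sum_cons]
    have hx := hp x (Multiset.mem_cons_self x s)
    have := ih (fun y hy => hp y (Multiset.mem_cons_of_mem hy))
    push_cast
    omega

lemma SS_mem_sumsetT {A : Finset ℤ} (h0 : (0:ℤ) ∈ A) {h : ℕ} {n : ℤ}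
    (hn : n ∈ SS A) (hle : n ≤ h) : n ∈ sumsetT A h 1 := by
  obtain ⟨m, hmem, hpos, hs⟩ := hn
  have := card_le_sum_of_pos hpos
  refine pad_mem h0 m ?_ hmem hs
  have : (Multiset.card m : ℤ) ≤ h := le_trans (hs ▸ this) hle
  exact_mod_cast this

lemma sumsetT_mem_SS {A : Finset ℤ} (hnn : ∀ x ∈ A, 0 ≤ x) {h : ℕ} {n : ℤ}
    (hn : n ∈ sumsetT A h 1) : n ∈ SS A := by
  obtain ⟨m, hc, hmem, hs⟩ := mem_sumsetT_iff.mp hn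
  refine ⟨m.filter (0 < ·), fun x hx => hmem x (Multiset.mem_of_mem_filter hx),
    fun x hx => (Multiset.mem_filter.mp hx).2, ?_⟩
  have hsplit := Multiset.filter_add_not (fun x => 0 < x) m
  have hzero : (m.filter (fun x => ¬ 0 < x)).sum = 0 := by
    apply Multiset.sum_eq_zero
    intro x hx
    have h1 := (Multiset.mem_filter.mp hx).2
    have h2 := hnn x (hmem x (Multiset.mem_of_mem_filter hx))
    omega
  have : (m.filter (fun x => 0 < x)).sum + (m.filter (fun x => ¬ 0 < x)).sum = m.sum := by
    rw [← Multiset.sum_add, hsplit]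
  rw [hzero, add_zero, hs] at this
  exact this

lemma span_finset_gcd (s : Finset ℤ) : Ideal.span (↑s : Set ℤ) = Ideal.span {s.gcd id} := by
  induction s using Finset.induction with
  | empty => simp [Finset.gcd_empty, Ideal.span_singleton_eq_bot.mpr rfl]
  | insert x s hx ih =>
    rw [Finset.coe_insert, Ideal.span_insert, ih, Finset.gcd_insert, span_gcd,
      Ideal.span_insert, id]

lemma card_finset_sum {ι : Type*} (s : Finset ι) (f : ι → Multiset ℤ) :
    Multiset.card (∑ i ∈ s, f i) = ∑ i ∈ s, Multiset.card (f i) := by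
  classical
  induction s using Finset.induction with
  | empty => simp
  | insert x s hx ih => simp [Finset.sum_insert hx, ih]

lemma sum_finset_sum {ι : Type*} (s : Finset ι) (f : ι → Multiset ℤ) :
    (∑ i ∈ s, f i).sum = ∑ i ∈ s, (f i).sum :=
  map_sum Multiset.sumAddMonoidHom f s

lemma map_sub_sum (ak : ℤ) (m : Multiset ℤ) :
    (m.map (fun x => ak - x)).sum = (Multiset.card m : ℤ) * ak - m.sum := by
  induction m using Multiset.induction with
  | empty => simp
  | cons x s ih =>
    simp only [Multiset.map_cons, Multiset.sum_cons, Multiset.card_cons, ih]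
    push_cast
    ring

lemma reflect_mem {A : Finset ℤ} {ak : ℤ} {h : ℕ} {n : ℤ}
    (hn : n ∈ sumsetT A h 1) :
    ((h : ℤ) * ak - n) ∈ sumsetT (A.image (fun x => ak - x)) h 1 := by
  obtain ⟨m, hc, hmem, hs⟩ := mem_sumsetT_iff.mp hn
  refine mem_sumsetT_iff.mpr ⟨m.map (fun x => ak - x), by simp [hc], ?_, ?_⟩
  · intro y hy
    obtain ⟨x, hx, rfl⟩ := Multiset.mem_map.mp hy
    exact Finset.mem_image.mpr ⟨x, hmem x hx, rfl⟩
  · rw [map_sub_sum, hc, hs]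

lemma mem_bounds {A : Finset ℤ} {ak : ℤ} (hb : ∀ x ∈ A, 0 ≤ x ∧ x ≤ ak)
    {h : ℕ} {n : ℤ} (hn : n ∈ sumsetT A h 1) : 0 ≤ n ∧ n ≤ (h : ℤ) * ak := by
  obtain ⟨m, hc, hmem, hs⟩ := mem_sumsetT_iff.mp hn
  constructor
  · exact hs ▸ Multiset.sum_nonneg (fun x hx => (hb x (hmem x hx)).1)
  · have := Multiset.sum_le_card_nsmul m ak (fun x hx => (hb x (hmem x hx)).2)
    rw [hs, hc] at this
    simpa [nsmul_eq_mul] using this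

lemma mid_lemma (k : ℕ) (hk : 1 ≤ k) (a : ℕ → ℤ) (ha0 : a 0 = 0)
    (hmono : ∀ i j, i ≤ k → j ≤ k → i < j → a i < a j)
    (A : Finset ℤ) (hA : A = (Finset.range (k + 1)).image a)
    (hgcd : A.gcd id = 1)
    (h : ℕ) (n : ℤ)
    (hlo : ((k:ℤ)-1) * (a k - 1) * a k ≤ n)
    (hhi : n ≤ (h:ℤ) * a k - ((k:ℤ)-1) * (a k - 1) * a k) :
    n ∈ sumsetT A h 1 := by
  classical
  set c0 : ℤ := ((k:ℤ)-1) * (a k - 1) * a k with hc0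
  have hapos : 0 < a k := ha0 ▸ hmono 0 k (Nat.zero_le k) le_rfl hk
  have hanneg : ∀ i, i ≤ k → 0 ≤ a i := by
    intro i hi
    rcases Nat.eq_zero_or_pos i with rfl | hi0
    · simp [ha0]
    · exact le_of_lt (ha0 ▸ hmono 0 i (Nat.zero_le k) hi hi0)
  have hale : ∀ i, i ≤ k → a i ≤ a k := by
    intro i hi
    rcases eq_or_lt_of_le hi with rfl | hi'
    · exact le_rfl
    · exact le_of_lt (hmono i k hi le_rfl hi')
  have hmem : n ∈ Ideal.span (↑A : Set ℤ) := by
    rw [span_finset_gcd, hgcd, Ideal.span_singleton_one]; trivial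
  obtain ⟨f, -, hf⟩ := Submodule.mem_span_finset.mp hmem
  have hainj : Set.InjOn a (Finset.range (k+1)) := by
    intro i hi j hj hij
    simp only [Finset.coe_range, Set.mem_Iio] at hi hj
    by_contra hne
    rcases Nat.lt_or_ge i j with hlt | hge
    · exact absurd hij (ne_of_lt (hmono i j (by omega) (by omega) hlt))
    · exact absurd hij.symm (ne_of_lt (hmono j i (by omega) (by omega) (by omega)))
  have hf' : ∑ i ∈ Finset.range (k+1), f (a i) * a i = n := by
    rw [← hf, hA, Finset.sum_image (fun i hi j hj => hainj (by simpa using hi) (by simpa using hj))]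
    simp [smul_eq_mul]
  set z : ℕ → ℤ := fun i => f (a i) with hz
  set x : ℕ → ℕ := fun i => ((z i) % a k).toNat with hxdef
  have hxcast : ∀ i, (x i : ℤ) = z i % a k := fun i =>
    Int.toNat_of_nonneg (Int.emod_nonneg _ (ne_of_gt hapos))
  have hxlt : ∀ i, (x i : ℤ) ≤ a k - 1 := by
    intro i; rw [hxcast i]
    have := Int.emod_lt_of_pos (z i) hapos; omega
  have hxdvd : ∀ i, a k ∣ z i - x i := by
    intro i
    exact ⟨z i / a k, by rw [hxcast, Int.emod_def]; ring⟩
  have hsplit : Finset.range (k+1) = insert 0 (insert k (Finset.Ioo 0 k)) := by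
    ext i; simp only [Finset.mem_range, Finset.mem_insert, Finset.mem_Ioo]; omega
  have h0notin : (0:ℕ) ∉ insert k (Finset.Ioo 0 k) := by
    simp only [Finset.mem_insert, Finset.mem_Ioo]; omega
  have hknotin : k ∉ Finset.Ioo 0 k := by simp
  have hn_eq : n = (∑ i ∈ Finset.Ioo 0 k, z i * a i) + z k * a k := by
    rw [← hf', hsplit, Finset.sum_insert h0notin, Finset.sum_insert hknotin, ha0]
    ring
  set μ : ℤ := ∑ i ∈ Finset.Ioo 0 k, (x i : ℤ) * a i with hμ
  set σn : ℕ := ∑ i ∈ Finset.Ioo 0 k, x i with hσ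
  have hcard : (Finset.Ioo 0 k).card = k - 1 := by rw [Nat.card_Ioo]; omega
  have hcast : ((k - 1 : ℕ) : ℤ) = (k:ℤ) - 1 := by omega
  have hterm : ∀ i ∈ Finset.Ioo 0 k,
      (0:ℤ) ≤ (x i : ℤ) * a i ∧ (x i : ℤ) * a i ≤ (a k - 1) * a k := by
    intro i hi
    simp only [Finset.mem_Ioo] at hi
    have h1 : 0 ≤ a i := hanneg i (le_of_lt hi.2)
    have h2 : a i ≤ a k := hale i (le_of_lt hi.2)
    have h3 : (0:ℤ) ≤ (x i : ℤ) := Int.ofNat_nonneg _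
    exact ⟨mul_nonneg h3 h1, mul_le_mul (hxlt i) h2 h1 (by omega)⟩
  have hμ0 : 0 ≤ μ := Finset.sum_nonneg (fun i hi => (hterm i hi).1)
  have hμc : μ ≤ c0 := by
    calc μ ≤ (Finset.Ioo 0 k).card • ((a k - 1) * a k) :=
          Finset.sum_le_card_nsmul _ _ _ (fun i hi => (hterm i hi).2)
    _ = c0 := by rw [hcard, nsmul_eq_mul, hcast, hc0]; ring
  have hσμ : (σn : ℤ) * a k - μ = ∑ i ∈ Finset.Ioo 0 k, (x i : ℤ) * (a k - a i) := by
    rw [hσ, hμ]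
    push_cast
    rw [Finset.sum_mul, ← Finset.sum_sub_distrib]
    exact Finset.sum_congr rfl (fun i _ => by ring)
  have hterm2 : ∀ i ∈ Finset.Ioo 0 k,
      (0:ℤ) ≤ (x i:ℤ) * (a k - a i) ∧ (x i:ℤ) * (a k - a i) ≤ (a k - 1) * a k := by
    intro i hi
    simp only [Finset.mem_Ioo] at hi
    have h1 : 0 ≤ a i := hanneg i (le_of_lt hi.2)
    have h2 : a i ≤ a k := hale i (le_of_lt hi.2)
    have h3 : (0:ℤ) ≤ (x i : ℤ) := Int.ofNat_nonneg _
    exact ⟨mul_nonneg h3 (by omega), mul_le_mul (hxlt i) (by omega) (by omega) (by omega)⟩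
  have hσ0 : 0 ≤ (σn:ℤ) * a k - μ := hσμ ▸ Finset.sum_nonneg (fun i hi => (hterm2 i hi).1)
  have hσc : (σn:ℤ) * a k - μ ≤ c0 := by
    rw [hσμ]
    calc ∑ i ∈ Finset.Ioo 0 k, (x i:ℤ) * (a k - a i)
        ≤ (Finset.Ioo 0 k).card • ((a k - 1) * a k) :=
          Finset.sum_le_card_nsmul _ _ _ (fun i hi => (hterm2 i hi).2)
    _ = c0 := by rw [hcard, nsmul_eq_mul, hcast, hc0]; ring
  have hdvd : a k ∣ n - μ := by
    have e1 : ∑ i ∈ Finset.Ioo 0 k, (z i - (x i:ℤ)) * a i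
        = (∑ i ∈ Finset.Ioo 0 k, z i * a i) - ∑ i ∈ Finset.Ioo 0 k, (x i:ℤ) * a i := by
      rw [← Finset.sum_sub_distrib]; exact Finset.sum_congr rfl (fun i _ => by ring)
    have e2 : n - μ = (∑ i ∈ Finset.Ioo 0 k, (z i - (x i:ℤ)) * a i) + z k * a k := by
      rw [e1, hn_eq, ← hμ]; ring
    rw [e2]
    exact dvd_add (Finset.dvd_sum fun i _ => Dvd.dvd.mul_right (hxdvd i) _) (dvd_mul_left (a k) (z k))
  obtain ⟨t, ht⟩ := hdvd
  have hnμ : 0 ≤ n - μ := by linarith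
  have ht0 : 0 ≤ t := by
    by_contra hneg
    push_neg at hneg
    have : a k * t < 0 := mul_neg_of_pos_of_neg hapos hneg
    omega
  set tn : ℕ := t.toNat with htn
  have htcast : (tn : ℤ) = t := Int.toNat_of_nonneg ht0
  have hcount : σn + tn ≤ h := by
    have hmul : ((σn + tn : ℕ) : ℤ) * a k ≤ (h:ℤ) * a k := by
      push_cast [htcast]
      have : ((σn:ℤ) + t) * a k = ((σn:ℤ) * a k - μ) + (n - μ) + μ := by
        rw [ht]; ring
      rw [this]
      linarith
    have := le_of_mul_le_mul_right hmul hapos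
    exact_mod_cast this
  have h0A : (0:ℤ) ∈ A := by
    rw [hA]; exact Finset.mem_image.mpr ⟨0, by simp, ha0⟩
  set M : Multiset ℤ :=
    (∑ i ∈ Finset.Ioo 0 k, Multiset.replicate (x i) (a i)) + Multiset.replicate tn (a k)
      with hM
  refine pad_mem h0A M ?_ ?_ ?_
  · rw [hM]
    simp only [Multiset.card_add, card_finset_sum, Multiset.card_replicate]
    rw [← hσ]
    exact hcount
  · intro y hy
    rw [hM, Multiset.mem_add] at hy
    rcases hy with hy | hy
    · obtain ⟨i, hi, hyi⟩ := Multiset.mem_sum.mp hy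
      simp only [Finset.mem_Ioo] at hi
      rw [Multiset.eq_of_mem_replicate hyi, hA]
      exact Finset.mem_image.mpr ⟨i, Finset.mem_range.mpr (by omega), rfl⟩
    · rw [Multiset.eq_of_mem_replicate hy, hA]
      exact Finset.mem_image.mpr ⟨k, Finset.mem_range.mpr (by omega), rfl⟩
  · rw [hM]
    rw [Multiset.sum_add, sum_finset_sum]
    simp only [Multiset.sum_replicate, nsmul_eq_mul]
    rw [← hμ, htcast, mul_comm]
    linarith [ht]

theorem stmt14 (k : ℕ) (hk : 1 ≤ k) (a : ℕ → ℤ)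
    (ha0 : a 0 = 0) (hmono : ∀ i j, i ≤ k → j ≤ k → i < j → a i < a j)
    (A : Finset ℤ) (hA : A = (Finset.range (k + 1)).image a)
    (hgcd : A.gcd id = 1)
    (h1 : ℕ) (hh1 : (h1 : ℤ) = ((k : ℤ) - 1) * (a k - 1) * a k + 1) :
    ∃ c d : ℤ, 0 ≤ c ∧ 0 ≤ d ∧ ∃ C D : Finset ℤ,
      ↑C ⊆ Set.Icc (0 : ℤ) (c - 2) ∧ ↑D ⊆ Set.Icc (0 : ℤ) (d - 2) ∧
      ∀ h : ℕ, h1 ≤ h →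
        sumsetT A h 1 =
          ↑C ∪ Set.Icc c ((h : ℤ) * a k - d) ∪ ((fun x => (h : ℤ) * a k - x) '' ↑D) := by
  classical
  have hapos : 0 < a k := ha0 ▸ hmono 0 k (Nat.zero_le k) le_rfl hk
  have hanneg : ∀ i, i ≤ k → 0 ≤ a i := by
    intro i hi
    rcases Nat.eq_zero_or_pos i with rfl | hi0
    · simp [ha0]
    · exact le_of_lt (ha0 ▸ hmono 0 i (Nat.zero_le k) hi hi0)
  have hale : ∀ i, i ≤ k → a i ≤ a k := by
    intro i hi
    rcases eq_or_lt_of_le hi with rfl | hi'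
    · exact le_rfl
    · exact le_of_lt (hmono i k hi le_rfl hi')
  set c0 : ℤ := ((k:ℤ)-1) * (a k - 1) * a k with hc0
  have hkz : (1:ℤ) ≤ (k:ℤ) := by exact_mod_cast hk
  have hc00 : 0 ≤ c0 := by
    apply mul_nonneg (mul_nonneg (by omega) (by omega)) (le_of_lt hapos)
  have hb : ∀ x ∈ A, 0 ≤ x ∧ x ≤ a k := by
    intro x hx
    rw [hA] at hx
    obtain ⟨i, hi, rfl⟩ := Finset.mem_image.mp hx
    rw [Finset.mem_range] at hi
    exact ⟨hanneg i (by omega), hale i (by omega)⟩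
  have h0A : (0:ℤ) ∈ A := by
    rw [hA]; exact Finset.mem_image.mpr ⟨0, by simp, ha0⟩
  have hakA : a k ∈ A := by
    rw [hA]; exact Finset.mem_image.mpr ⟨k, by simp, rfl⟩
  set A' : Finset ℤ := A.image (fun x => a k - x) with hA'
  have hb' : ∀ x ∈ A', 0 ≤ x ∧ x ≤ a k := by
    intro x hx
    obtain ⟨y, hy, rfl⟩ := Finset.mem_image.mp hx
    have := hb y hy
    omega
  have h0A' : (0:ℤ) ∈ A' := by
    refine Finset.mem_image.mpr ⟨a k, hakA, by ring⟩
  have hback : ∀ (h : ℕ) (n : ℤ), n ∈ sumsetT A' h 1 → ((h:ℤ) * a k - n) ∈ sumsetT A h 1 := by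
    intro h n hn
    have him : A'.image (fun x => a k - x) = A := by
      rw [hA', Finset.image_image]
      have : ((fun x => a k - x) ∘ (fun x => a k - x)) = fun x : ℤ => x := by
        funext x; simp
      rw [this, Finset.image_id']
    have := reflect_mem (ak := a k) hn
    rwa [him] at this
  -- least c
  obtain ⟨c, hcP, hcmin⟩ := Int.exists_least_of_bdd
    (P := fun m => 0 ≤ m ∧ ∀ n : ℤ, m ≤ n → n ≤ c0 → n ∈ SS A)
    ⟨0, fun z hz => hz.1⟩ ⟨c0 + 1, by omega, fun n h1n h2n => absurd (le_trans h1n h2n) (by omega)⟩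
  obtain ⟨d, hdP, hdmin⟩ := Int.exists_least_of_bdd
    (P := fun m => 0 ≤ m ∧ ∀ n : ℤ, m ≤ n → n ≤ c0 → n ∈ SS A')
    ⟨0, fun z hz => hz.1⟩ ⟨c0 + 1, by omega, fun n h1n h2n => absurd (le_trans h1n h2n) (by omega)⟩
  have hcle : c ≤ c0 + 1 := hcmin (c0 + 1)
    ⟨by omega, fun n h1n h2n => absurd (le_trans h1n h2n) (by omega)⟩
  have hdle : d ≤ c0 + 1 := hdmin (c0 + 1)
    ⟨by omega, fun n h1n h2n => absurd (le_trans h1n h2n) (by omega)⟩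
  have cstep : ∀ n : ℤ, 0 ≤ n → n ∈ SS A → n < c → n ≤ c - 2 := by
    intro n hn0 hnS hnc
    by_contra hcon
    have hne : n = c - 1 := by omega
    have : c ≤ c - 1 := hcmin (c - 1) ⟨by omega, fun m h1m h2m => by
      rcases eq_or_lt_of_le h1m with rfl | hlt
      · exact hne ▸ hnS
      · exact hcP.2 m (by omega) h2m⟩
    omega
  have dstep : ∀ n : ℤ, 0 ≤ n → n ∈ SS A' → n < d → n ≤ d - 2 := by
    intro n hn0 hnS hnc
    by_contra hcon
    have hne : n = d - 1 := by omega
    have : d ≤ d - 1 := hdmin (d - 1) ⟨by omega, fun m h1m h2m => by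
      rcases eq_or_lt_of_le h1m with rfl | hlt
      · exact hne ▸ hnS
      · exact hdP.2 m (by omega) h2m⟩
    omega
  refine ⟨c, d, hcP.1, hdP.1,
    (Finset.Icc 0 (c-2)).filter (fun n => n ∈ SS A),
    (Finset.Icc 0 (d-2)).filter (fun n => n ∈ SS A'), ?_, ?_, ?_⟩
  · intro x hx
    simp only [Finset.coe_filter, Set.mem_setOf_eq, Finset.mem_Icc] at hx
    exact Set.mem_Icc.mpr hx.1
  · intro x hx
    simp only [Finset.coe_filter, Set.mem_setOf_eq, Finset.mem_Icc] at hx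
    exact Set.mem_Icc.mpr hx.1
  · intro h hh
    have hhz : c0 + 1 ≤ (h : ℤ) := by
      rw [← hh1]
      exact_mod_cast hh
    -- low membership helpers
    have claim_low : ∀ n : ℤ, n ∈ SS A → n ≤ c0 → n ∈ sumsetT A h 1 := by
      intro n hnS hnc
      exact SS_mem_sumsetT h0A hnS (by omega)
    have claim_low' : ∀ n : ℤ, n ∈ SS A' → n ≤ c0 → n ∈ sumsetT A' h 1 := by
      intro n hnS hnc
      exact SS_mem_sumsetT h0A' hnS (by omega)
    ext n
    constructor
    · intro hn
      obtain ⟨hn0, hnk⟩ := mem_bounds hb hn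
      by_cases h1c : n < c
      · refine Or.inl (Or.inl ?_)
        have hnS : n ∈ SS A := sumsetT_mem_SS (fun x hx => (hb x hx).1) hn
        simp only [Finset.coe_filter, Set.mem_setOf_eq, Finset.mem_Icc]
        exact ⟨⟨hn0, cstep n hn0 hnS h1c⟩, hnS⟩
      · by_cases h2c : (h:ℤ) * a k - d < n
        · refine Or.inr ?_
          have hn' : ((h:ℤ) * a k - n) ∈ SS A' :=
            sumsetT_mem_SS (fun x hx => (hb' x hx).1) (reflect_mem hn)
          refine ⟨(h:ℤ) * a k - n, ?_, by ring⟩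
          simp only [Finset.coe_filter, Set.mem_setOf_eq, Finset.mem_Icc]
          exact ⟨⟨by omega, dstep _ (by omega) hn' (by omega)⟩, hn'⟩
        · exact Or.inl (Or.inr (Set.mem_Icc.mpr ⟨by omega, by omega⟩))
    · rintro ((hn | hn) | hn)
      · simp only [Finset.coe_filter, Set.mem_setOf_eq, Finset.mem_Icc] at hn
        exact claim_low n hn.2 (by omega)
      · rw [Set.mem_Icc] at hn
        by_cases hn1 : n ≤ c0
        · exact claim_low n (hcP.2 n hn.1 hn1) hn1
        · by_cases hn2 : n ≤ (h:ℤ) * a k - c0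
          · exact mid_lemma k hk a ha0 hmono A hA hgcd h n (by omega) (by rw [← hc0]; omega)
          · have h1' : d ≤ (h:ℤ) * a k - n := by omega
            have h2' : (h:ℤ) * a k - n ≤ c0 := by omega
            have := hback h _ (claim_low' _ (hdP.2 _ h1' h2') h2')
            have he : (h:ℤ) * a k - ((h:ℤ) * a k - n) = n := by ring
            rwa [he] at this
      · obtain ⟨m, hm, rfl⟩ := hn
        simp only [Finset.coe_filter, Set.mem_setOf_eq, Finset.mem_Icc] at hm
        exact hback h m (claim_low' m hm.2 (by omega))
end

section
/- Let k ≥ 2 and A = {a_0, ..., a_k} with 0 = a_0 < a_1 < ... < a_k and gcd(A) = 1. For every positive integer t, if n is an integer with (t·a_k − 1)·Σ_{j=1}^{k−1} a_j ≤ n ≤ h·a_k − (k−1)(t·a_k − 1)·a_k, then for each s ∈ [1,t] there exist nonnegative integers x_{1,s}, ..., x_{k,s} with (s−1)·a_k ≤ x_{j,s} ≤ s·a_k − 1 for j ≤ k−1, Σ_{j=1}^k x_{j,s}·a_j = n, and Σ_{j=1}^k x_{j,s} ≤ h − (k−1)(t−s)·a_k ≤ h. -/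
set_option maxHeartbeats 1000000

lemma bezout_finset (s : Finset ℕ) (f : ℕ → ℤ) :
    ∃ c : ℕ → ℤ, ∑ i ∈ s, c i * f i = s.gcd f := by
  classical
  induction s using Finset.induction_on with
  | empty => exact ⟨0, by simp⟩
  | @insert a s ha ih =>
    obtain ⟨c, hc⟩ := ih
    refine ⟨fun i => if i = a then Int.gcdA (f a) (s.gcd f)
      else Int.gcdB (f a) (s.gcd f) * c i, ?_⟩
    rw [Finset.sum_insert ha, Finset.gcd_insert]
    beta_reduce
    rw [if_pos rfl]
    have hs : ∑ i ∈ s, (if i = a then Int.gcdA (f a) (s.gcd f)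
        else Int.gcdB (f a) (s.gcd f) * c i) * f i
        = Int.gcdB (f a) (s.gcd f) * ∑ i ∈ s, c i * f i := by
      rw [Finset.mul_sum]
      refine Finset.sum_congr rfl fun i hi => ?_
      rw [if_neg (by rintro rfl; exact ha hi), mul_assoc]
    rw [hs, hc, ← Int.coe_gcd, Int.gcd_eq_gcd_ab]
    ring

theorem stmt16 (k : ℕ) (hk : 2 ≤ k) (a : ℕ → ℤ)
    (ha0 : a 0 = 0) (hmono : ∀ i j, i ≤ k → j ≤ k → i < j → a i < a j)
    (hgcd : ((Finset.range (k + 1)).image a).gcd id = 1)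
    (t h : ℕ) (ht : 0 < t) (hh : 0 < h)
    (n : ℤ)
    (hn1 : ((t : ℤ) * a k - 1) * ∑ j ∈ Finset.Icc 1 (k - 1), a j ≤ n)
    (hn2 : n ≤ (h : ℤ) * a k - ((k : ℤ) - 1) * ((t : ℤ) * a k - 1) * a k) :
    ∀ s : ℕ, 1 ≤ s → s ≤ t →
      ∃ x : Fin k → ℕ,
        (∀ j : Fin k, (j : ℕ) + 1 ≤ k - 1 →
          ((s : ℤ) - 1) * a k ≤ (x j : ℤ) ∧ (x j : ℤ) ≤ (s : ℤ) * a k - 1) ∧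
        (∑ j : Fin k, (x j : ℤ) * a ((j : ℕ) + 1) = n) ∧
        (∑ j : Fin k, (x j : ℤ)) ≤ (h : ℤ) - ((k : ℤ) - 1) * ((t : ℤ) - (s : ℤ)) * a k ∧
        (h : ℤ) - ((k : ℤ) - 1) * ((t : ℤ) - (s : ℤ)) * a k ≤ (h : ℤ) := by
  classical
  intro s hs1 hst
  set K := a k with hKdef
  have hK : 0 < K := by
    have h0 := hmono 0 k (Nat.zero_le k) le_rfl (by omega)
    rw [ha0] at h0
    rwa [hKdef]
  have hapos : ∀ j, j ∈ Finset.range (k-1) → 0 < a (j+1) := by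
    intro j hj
    rw [Finset.mem_range] at hj
    have h0 := hmono 0 (j+1) (Nat.zero_le k) (by omega) (by omega)
    rwa [ha0] at h0
  -- Bezout representation of n
  have hgcd' : (Finset.range (k+1)).gcd a = 1 := by
    rw [Finset.gcd_image] at hgcd
    simpa using hgcd
  obtain ⟨c, hc⟩ := bezout_finset (Finset.range (k+1)) a
  rw [hgcd'] at hc
  set y : ℕ → ℤ := fun j => n * c j with hy
  have hyn : ∑ j ∈ Finset.range (k+1), y j * a j = n := by
    calc ∑ j ∈ Finset.range (k+1), y j * a j
        = n * ∑ j ∈ Finset.range (k+1), c j * a j := by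
          rw [Finset.mul_sum]
          exact Finset.sum_congr rfl fun j _ => by simp [hy, mul_assoc]
      _ = n := by rw [hc, mul_one]
  have hk1 : k - 1 + 1 = k := by omega
  have hn' : (∑ j ∈ Finset.range (k-1), y (j+1) * a (j+1)) + y k * K = n := by
    have h2 := Finset.sum_range_succ' (fun j => y j * a j) (k-1)
    rw [hk1] at h2
    rw [← hyn, Finset.sum_range_succ, h2, ha0, hKdef]
    ring
  set x' : ℕ → ℤ := fun j => ((s:ℤ) - 1) * K + y j % K with hx'
  have hs1' : (1:ℤ) ≤ (s:ℤ) := by exact_mod_cast hs1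
  have hx'lb : ∀ j, ((s:ℤ)-1) * K ≤ x' j := fun j =>
    le_add_of_nonneg_right (Int.emod_nonneg _ hK.ne')
  have hx'ub : ∀ j, x' j ≤ (s:ℤ) * K - 1 := by
    intro j
    have h1 := Int.emod_lt_of_pos (y j) hK
    have : x' j = ((s:ℤ) - 1) * K + y j % K := rfl
    nlinarith [h1]
  have hx'0 : ∀ j, 0 ≤ x' j := by
    intro j
    have h1 := hx'lb j
    nlinarith [mul_nonneg (by linarith : (0:ℤ) ≤ (s:ℤ)-1) hK.le]
  set S : ℤ := ∑ j ∈ Finset.range (k-1), x' (j+1) * a (j+1) with hS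
  have hdvd : K ∣ n - S := by
    have hterm : ∀ j, K ∣ y j - x' j := by
      intro j
      refine ⟨y j / K - ((s:ℤ) - 1), ?_⟩
      have hxj : x' j = ((s:ℤ) - 1) * K + y j % K := rfl
      rw [hxj, Int.emod_def]
      ring
    have heq : n - S
        = (∑ j ∈ Finset.range (k-1), (y (j+1) - x' (j+1)) * a (j+1)) + y k * K := by
      have h3 : ∑ j ∈ Finset.range (k-1), (y (j+1) - x' (j+1)) * a (j+1)
          = (∑ j ∈ Finset.range (k-1), y (j+1) * a (j+1)) - S := by
        rw [hS, ← Finset.sum_sub_distrib]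
        exact Finset.sum_congr rfl fun j _ => by ring
      rw [h3]
      linarith [hn']
    rw [heq]
    exact dvd_add (Finset.dvd_sum fun j _ => Dvd.dvd.mul_right (hterm (j+1)) _)
      (dvd_mul_left K (y k))
  set xk : ℤ := (n - S) / K with hxkdef
  have hxkK : xk * K = n - S := Int.ediv_mul_cancel hdvd
  have hSig0 : 0 ≤ ∑ j ∈ Finset.range (k-1), a (j+1) :=
    Finset.sum_nonneg fun j hj => (hapos j hj).le
  have hSigeq : ∑ j ∈ Finset.Icc 1 (k-1), a j = ∑ j ∈ Finset.range (k-1), a (j+1) := by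
    have hIcc : Finset.Icc 1 (k-1) = Finset.Ico 1 k := by
      rw [← Finset.Ico_add_one_right_eq_Icc]
      have h5 : k - 1 + 1 = k := by omega
      rw [h5]
    rw [hIcc, Finset.sum_Ico_eq_sum_range]
    have h4 : k - 1 = k - 1 := rfl
    exact Finset.sum_congr rfl fun i _ => by rw [add_comm]
  have hSlow : ((s:ℤ)-1) * K * (∑ j ∈ Finset.range (k-1), a (j+1)) ≤ S := by
    rw [Finset.mul_sum, hS]
    exact Finset.sum_le_sum fun j hj =>
      mul_le_mul_of_nonneg_right (hx'lb (j+1)) (hapos j hj).le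
  have hShigh : S ≤ ((s:ℤ)*K - 1) * (∑ j ∈ Finset.range (k-1), a (j+1)) := by
    rw [Finset.mul_sum, hS]
    exact Finset.sum_le_sum fun j hj =>
      mul_le_mul_of_nonneg_right (hx'ub (j+1)) (hapos j hj).le
  have hs_le_t : (s:ℤ) ≤ (t:ℤ) := by exact_mod_cast hst
  have hstep : ((s:ℤ)*K - 1) * (∑ j ∈ Finset.range (k-1), a (j+1))
      ≤ ((t:ℤ)*K - 1) * (∑ j ∈ Finset.range (k-1), a (j+1)) := by
    apply mul_le_mul_of_nonneg_right _ hSig0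
    nlinarith [mul_le_mul_of_nonneg_right hs_le_t hK.le]
  have hSn : S ≤ n := by
    rw [hSigeq] at hn1
    linarith [hShigh, hstep]
  have hxk0 : 0 ≤ xk := Int.ediv_nonneg (by linarith) hK.le
  have hxk_ub : xk ≤ (h:ℤ) - ((k:ℤ)-1) * ((t:ℤ)*K - 1)
      - ((s:ℤ)-1) * (∑ j ∈ Finset.range (k-1), a (j+1)) := by
    have h1 : xk * K ≤ ((h:ℤ) - ((k:ℤ)-1) * ((t:ℤ)*K - 1)
        - ((s:ℤ)-1) * (∑ j ∈ Finset.range (k-1), a (j+1))) * K := by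
      nlinarith [hxkK, hSlow, hn2]
    exact le_of_mul_le_mul_right h1 hK
  set xN : ℕ → ℕ := fun j => if j + 1 = k then xk.toNat else (x' (j+1)).toNat with hxN
  refine ⟨fun j => xN (j : ℕ), ?_, ?_, ?_, ?_⟩
  · intro j hj
    have hne : (j:ℕ) + 1 ≠ k := by omega
    have hx : xN (j:ℕ) = (x' ((j:ℕ)+1)).toNat := by simp [hxN, hne]
    beta_reduce
    rw [hx, Int.toNat_of_nonneg (hx'0 _)]
    exact ⟨hx'lb _, hx'ub _⟩
  · rw [Fin.sum_univ_eq_sum_range (fun j => ((xN j : ℤ) * a (j+1))) k]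
    have hsum : ∑ j ∈ Finset.range k, ((xN j : ℤ) * a (j+1)) = S + xk * K := by
      rw [← hk1, Finset.sum_range_succ, hk1]
      congr 1
      · rw [hS]
        refine Finset.sum_congr rfl fun j hj => ?_
        have hne : j + 1 ≠ k := by rw [Finset.mem_range] at hj; omega
        simp [hxN, hne, Int.toNat_of_nonneg (hx'0 (j+1))]
      · simp [hxN, hk1, Int.toNat_of_nonneg hxk0, hKdef]
    rw [hsum, hxkK]
    ring
  · rw [Fin.sum_univ_eq_sum_range (fun j => ((xN j : ℤ))) k]
    have hsum2 : ∑ j ∈ Finset.range k, ((xN j : ℤ))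
        = (∑ j ∈ Finset.range (k-1), x' (j+1)) + xk := by
      rw [← hk1, Finset.sum_range_succ, hk1]
      congr 1
      · refine Finset.sum_congr rfl fun j hj => ?_
        have hne : j + 1 ≠ k := by rw [Finset.mem_range] at hj; omega
        simp [hxN, hne, Int.toNat_of_nonneg (hx'0 (j+1))]
      · simp [hxN, hk1, Int.toNat_of_nonneg hxk0]
    rw [hsum2]
    have hsum3 : ∑ j ∈ Finset.range (k-1), x' (j+1) ≤ ((k:ℤ)-1) * ((s:ℤ)*K - 1) := by
      calc ∑ j ∈ Finset.range (k-1), x' (j+1)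
          ≤ ∑ _j ∈ Finset.range (k-1), ((s:ℤ)*K - 1) :=
            Finset.sum_le_sum fun j _ => hx'ub (j+1)
        _ = ((k-1 : ℕ) : ℤ) * ((s:ℤ)*K - 1) := by
            rw [Finset.sum_const, Finset.card_range, nsmul_eq_mul]
        _ = ((k:ℤ)-1) * ((s:ℤ)*K - 1) := by
            have : ((k-1 : ℕ) : ℤ) = (k:ℤ) - 1 := by
              have : 1 ≤ k := by omega
              push_cast [this]; ring
            rw [this]
    have hmul0 : 0 ≤ ((s:ℤ)-1) * (∑ j ∈ Finset.range (k-1), a (j+1)) :=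
      mul_nonneg (by linarith) hSig0
    nlinarith [hxk_ub, hsum3, hmul0]
  · have h1 : (0:ℤ) ≤ ((k:ℤ)-1) := by
      have : (2:ℤ) ≤ (k:ℤ) := by exact_mod_cast hk
      linarith
    have h2 : (0:ℤ) ≤ (t:ℤ)-(s:ℤ) := by linarith
    nlinarith [mul_nonneg (mul_nonneg h1 h2) hK.le]
end
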